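/- arXiv:0910.2454 — 2 statements merged into one kernel-verified Lean document; each statement's English description precedes it below -/
import Mathlib

section
/- Let T: 𝒜 → 𝒜 be a linear map. Then T preserves power inner products (i.e. ⟨(Tf)^k, (Tg)^k⟩ = ⟨f^k, g^k⟩ for all integers k ≥ 1 and all f,g ∈ 𝒜) and is surjective onto 𝒜 if and only if there exist a measurable function α: ℝ^d → ℝ and a *-automorphism T₁ of 𝒜 such that Tf = e^{iα}·(T₁f) for every f ∈ 𝒜. (This is the unitary case of the structure theorem of the paper: Γ₂(T) is a unitary operator on the quadratic Fock space if and only if T = e^{iα}T₁ with T₁ a *-automorphism.) -/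
open MeasureTheory Complex Finset
open scoped Nat ENNReal

noncomputable section

/-- The domain `ℝ^d`. -/
abbrev Dom (d : ℕ) := Fin d → ℝ

/-- Membership in `𝒜 = L²(ℝ^d) ∩ L^∞(ℝ^d)`. -/
def MemA (d : ℕ) (f : Dom d → ℂ) : Prop :=
  MemLp f 2 (volume : Measure (Dom d)) ∧ MemLp f ⊤ (volume : Measure (Dom d))

/-- `⟨f^k, g^k⟩`, the power inner products. -/
def pip (d : ℕ) (f g : Dom d → ℂ) (k : ℕ) : ℂ :=
  ∫ x : Dom d, (starRingEnd ℂ) (f x) ^ k * g x ^ k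

/-- `S_n(f,g)`, the inner product of quadratic `n`-particle vectors. -/
def Sker (c : ℝ) (d : ℕ) (f g : Dom d → ℂ) (n : ℕ) : ℂ :=
  ∑ p : Nat.Partition n,
    (n ! : ℂ) ^ 2 * 2 ^ (2 * n - 1) *
      ∏ j ∈ p.parts.toFinset,
        (c : ℂ) ^ p.parts.count j /
            (((p.parts.count j)! : ℂ) * (j : ℂ) ^ p.parts.count j) *
          pip d f g j ^ p.parts.count j

/-- `K(f,g) = ⟨Ψ(f),Ψ(g)⟩`, the inner product of quadratic exponential vectors. -/
def Kker (c : ℝ) (d : ℕ) (f g : Dom d → ℂ) : ℂ :=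
  Complex.exp (-(c / 2 : ℂ) *
    ∫ x : Dom d, Complex.log (1 - 4 * (starRingEnd ℂ) (f x) * g x))


/-- A `*`-endomorphism of the Hilbert algebra `𝒜 = L²(ℝ^d) ∩ L^∞(ℝ^d)`: a linear map
of `𝒜` into itself (well defined on a.e.-equivalence classes) preserving the `L²` inner
product, pointwise multiplication and conjugation. -/
structure IsStarEndo (d : ℕ) (T₁ : (Dom d → ℂ) → (Dom d → ℂ)) : Prop where
  mem : ∀ f, MemA d f → MemA d (T₁ f)
  ae_eq : ∀ f g, MemA d f → MemA d g → f =ᵐ[(volume : Measure (Dom d))] g →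
    T₁ f =ᵐ[(volume : Measure (Dom d))] T₁ g
  add : ∀ f g, MemA d f → MemA d g →
    T₁ (f + g) =ᵐ[(volume : Measure (Dom d))] T₁ f + T₁ g
  smul : ∀ (a : ℂ) (f : Dom d → ℂ), MemA d f →
    T₁ (a • f) =ᵐ[(volume : Measure (Dom d))] a • T₁ f
  inner : ∀ f g, MemA d f → MemA d g →
    ∫ x : Dom d, (starRingEnd ℂ) (T₁ f x) * T₁ g x =
      ∫ x : Dom d, (starRingEnd ℂ) (f x) * g x
  mul : ∀ f g, MemA d f → MemA d g →
    T₁ (f * g) =ᵐ[(volume : Measure (Dom d))] T₁ f * T₁ g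
  star : ∀ f, MemA d f →
    T₁ (fun x => (starRingEnd ℂ) (f x)) =ᵐ[(volume : Measure (Dom d))]
      fun x => (starRingEnd ℂ) (T₁ f x)

/-- A `*`-automorphism of `𝒜`: a bijective (on a.e.-equivalence classes)
`*`-endomorphism. -/
def IsStarAuto (d : ℕ) (T₁ : (Dom d → ℂ) → (Dom d → ℂ)) : Prop :=
  IsStarEndo d T₁ ∧
  (∀ g, MemA d g → ∃ f, MemA d f ∧ T₁ f =ᵐ[(volume : Measure (Dom d))] g) ∧
  (∀ f g, MemA d f → MemA d g →
    T₁ f =ᵐ[(volume : Measure (Dom d))] T₁ g → f =ᵐ[(volume : Measure (Dom d))] g)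

section Aux

variable {d : ℕ}

local notation "μ" => (volume : Measure (Dom d))

lemma memA_aesm {f : Dom d → ℂ} (hf : MemA d f) : AEStronglyMeasurable f μ := hf.1.1

lemma memA_conj {f : Dom d → ℂ} (hf : MemA d f) :
    MemA d (fun x => (starRingEnd ℂ) (f x)) := by
  have hsm : AEStronglyMeasurable (fun x => (starRingEnd ℂ) (f x)) μ :=
    Complex.continuous_conj.comp_aestronglyMeasurable hf.1.1
  have hnorm : ∀ p : ℝ≥0∞, MemLp f p μ → MemLp (fun x => (starRingEnd ℂ) (f x)) p μ := by
    intro p hp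
    refine ⟨hsm, ?_⟩
    rw [eLpNorm_congr_norm_ae (f := fun x => (starRingEnd ℂ) (f x)) (g := f)
      (Filter.Eventually.of_forall fun x => by simp)]
    exact hp.2
  exact ⟨hnorm 2 hf.1, hnorm ⊤ hf.2⟩

lemma meminf_mul {f g : Dom d → ℂ} (hf : MemLp f ⊤ μ) (hg : MemLp g ⊤ μ) :
    MemLp (fun x => f x * g x) ⊤ μ := by
  have := MemLp.smul (p := ⊤) (r := ⊤) hg hf
  exact this

lemma memtwo_mul {f g : Dom d → ℂ} (hf : MemLp f ⊤ μ) (hg : MemLp g 2 μ) :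
    MemLp (fun x => f x * g x) 2 μ := by
  have := MemLp.smul (p := ⊤) (r := 2) hg hf
  exact this

lemma integrable_mul_L2 {f g : Dom d → ℂ} (hf : MemLp f 2 μ) (hg : MemLp g 2 μ) :
    Integrable (fun x => f x * g x) μ := by
  have h1 : (1 : ℝ≥0∞) / 1 = 1 / 2 + 1 / 2 := by
    rw [ENNReal.add_halves]; simp
  haveI : ENNReal.HolderTriple 2 2 1 := ⟨by rw [ENNReal.inv_two_add_inv_two, inv_one]⟩
  have := MemLp.smul (r := 1) hg hf
  rw [← memLp_one_iff_integrable]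
  exact this

lemma MemA.mul2 {f g : Dom d → ℂ} (hf : MemA d f) (hg : MemA d g) :
    MemA d (fun x => f x * g x) :=
  ⟨memtwo_mul hf.2 hg.1, meminf_mul hf.2 hg.2⟩

lemma meminf_pow {f : Dom d → ℂ} (hf : MemLp f ⊤ μ) (n : ℕ) :
    MemLp (fun x => f x ^ n) ⊤ μ := by
  induction n with
  | zero => simpa using memLp_top_const (1 : ℂ)
  | succ n ih =>
      have := meminf_mul ih hf
      simpa [pow_succ] using this

lemma memA_pow_mul {f h : Dom d → ℂ} (hf : MemA d f) (hh : MemA d h)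
    (m n : ℕ) (hmn : 1 ≤ m + n) :
    MemA d (fun x => f x ^ m * h x ^ n) := by
  have hinf : MemLp (fun x => f x ^ m * h x ^ n) ⊤ μ :=
    meminf_mul (meminf_pow hf.2 m) (meminf_pow hh.2 n)
  rcases Nat.eq_zero_or_pos m with hm | hm
  · subst hm
    rcases Nat.exists_eq_succ_of_ne_zero (by omega : n ≠ 0) with ⟨n', rfl⟩
    have htop : MemLp (fun x => h x ^ n') ⊤ μ := meminf_pow hh.2 n'
    have h2 : MemLp (fun x => (h x ^ n') * h x) 2 μ := memtwo_mul htop hh.1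
    refine ⟨?_, hinf⟩
    have : (fun x : Dom d => f x ^ 0 * h x ^ (n' + 1)) = fun x => (h x ^ n') * h x := by
      funext x; ring
    rw [this]; exact h2
  · rcases Nat.exists_eq_succ_of_ne_zero (by omega : m ≠ 0) with ⟨m', rfl⟩
    have htop : MemLp (fun x => f x ^ m' * h x ^ n) ⊤ μ :=
      meminf_mul (meminf_pow hf.2 m') (meminf_pow hh.2 n)
    have h2 : MemLp (fun x => (f x ^ m' * h x ^ n) * f x) 2 μ := memtwo_mul htop hf.1
    refine ⟨?_, hinf⟩
    have : (fun x : Dom d => f x ^ (m' + 1) * h x ^ n)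
        = fun x => (f x ^ m' * h x ^ n) * f x := by
      funext x; ring
    rw [this]; exact h2

lemma memA_add {f g : Dom d → ℂ} (hf : MemA d f) (hg : MemA d g) :
    MemA d (f + g) := ⟨hf.1.add hg.1, hf.2.add hg.2⟩

lemma memA_smul (a : ℂ) {f : Dom d → ℂ} (hf : MemA d f) : MemA d (a • f) :=
  ⟨hf.1.const_smul a, hf.2.const_smul a⟩

lemma memA_zero : MemA d (0 : Dom d → ℂ) := ⟨MemLp.zero, MemLp.zero⟩

end Aux
section Gauss

/-- A fixed everywhere-positive element of `𝒜` (a Gaussian). -/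
def Efun (d : ℕ) : Dom d → ℝ := fun x => ∏ i, Real.exp (-(x i) ^ 2)

lemma Efun_pos {d : ℕ} (x : Dom d) : 0 < Efun d x :=
  Finset.prod_pos fun i _ => Real.exp_pos _

lemma Efun_le_one {d : ℕ} (x : Dom d) : Efun d x ≤ 1 := by
  apply Finset.prod_le_one
  · exact fun i _ => (Real.exp_pos _).le
  · intro i _
    rw [Real.exp_le_one_iff]
    nlinarith [sq_nonneg (x i)]

lemma Efun_continuous {d : ℕ} : Continuous (Efun d) := by
  unfold Efun
  exact continuous_finset_prod _ fun i _ =>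
    (Real.continuous_exp.comp ((continuous_apply i).pow 2).neg)

lemma Efun_integrable {d : ℕ} : Integrable (Efun d) (volume : Measure (Dom d)) := by
  have h1 : Integrable (fun t : ℝ => Real.exp (-(1:ℝ) * t ^ 2)) volume :=
    integrable_exp_neg_mul_sq one_pos
  have := Integrable.fintype_prod (ι := Fin d) (E := ℝ)
    (f := fun _ t => Real.exp (-t ^ 2)) (fun i => by simpa using h1)
  exact this

/-- The complex-valued Gaussian. -/
def eG (d : ℕ) : Dom d → ℂ := fun x => (Efun d x : ℂ)

lemma eG_memA (d : ℕ) : MemA d (eG d) := by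
  have hsm : AEStronglyMeasurable (eG d) (volume : Measure (Dom d)) :=
    (Complex.continuous_ofReal.comp Efun_continuous).aestronglyMeasurable
  constructor
  · rw [memLp_two_iff_integrable_sq_norm hsm]
    have : (fun x : Dom d => ‖eG d x‖ ^ 2) = fun x => Efun d x * Efun d x := by
      funext x
      rw [eG, Complex.norm_real, Real.norm_of_nonneg (Efun_pos x).le]; ring
    rw [this]
    apply Efun_integrable.mono' (by
      exact ((Complex.continuous_ofReal.comp Efun_continuous).aestronglyMeasurable.norm.mul
        (Complex.continuous_ofReal.comp Efun_continuous).aestronglyMeasurable.norm).congr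
        (Filter.Eventually.of_forall fun x => by
          simp [eG, Complex.norm_real, Real.norm_of_nonneg (Efun_pos x).le]))
    exact Filter.Eventually.of_forall fun x => by
      have h1 := Efun_pos (d := d) x
      have h2 := Efun_le_one (d := d) x
      rw [Real.norm_of_nonneg (by positivity)]
      nlinarith
  · refine memLp_top_of_bound hsm 1 (Filter.Eventually.of_forall fun x => ?_)
    rw [eG, Complex.norm_real, Real.norm_of_nonneg (Efun_pos x).le]
    exact Efun_le_one x

lemma eG_conj (d : ℕ) (x : Dom d) : (starRingEnd ℂ) (eG d x) = eG d x := by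
  simp [eG]

end Gauss
section Polar

/-- Mixed moment integrals. -/
def Jint (d : ℕ) (f g h : Dom d → ℂ) (k i j : ℕ) : ℂ :=
  ∫ x : Dom d, (starRingEnd ℂ) (f x) ^ i * (starRingEnd ℂ) (h x) ^ (k - i)
    * g x ^ j * h x ^ (k - j)

lemma Jint_integrable (d : ℕ) {f g h : Dom d → ℂ}
    (hf : MemA d f) (hg : MemA d g) (hh : MemA d h) {k i j : ℕ}
    (hk : 1 ≤ k) (hi : i ≤ k) (hj : j ≤ k) :
    Integrable (fun x => (starRingEnd ℂ) (f x) ^ i * (starRingEnd ℂ) (h x) ^ (k - i)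
      * g x ^ j * h x ^ (k - j)) (volume : Measure (Dom d)) := by
  have hF := memA_pow_mul hf hh i (k - i) (by omega)
  have hG := memA_pow_mul hg hh j (k - j) (by omega)
  have hrw : (fun x => (starRingEnd ℂ) (f x) ^ i * (starRingEnd ℂ) (h x) ^ (k - i)
      * g x ^ j * h x ^ (k - j))
      = fun x => (starRingEnd ℂ) (f x ^ i * h x ^ (k - i)) * (g x ^ j * h x ^ (k - j)) := by
    funext x; rw [map_mul, map_pow, map_pow]; ring
  rw [hrw]
  exact integrable_mul_L2 (memA_conj hF).1 hG.1

lemma pip_congr_ae (d : ℕ) {f₁ f₂ g₁ g₂ : Dom d → ℂ}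
    (hf : f₁ =ᵐ[(volume : Measure (Dom d))] f₂)
    (hg : g₁ =ᵐ[(volume : Measure (Dom d))] g₂) (k : ℕ) :
    pip d f₁ g₁ k = pip d f₂ g₂ k := by
  rw [pip, pip]
  apply integral_congr_ae
  filter_upwards [hf, hg] with x h1 h2
  rw [h1, h2]

lemma pip_expand (d : ℕ) {f g h : Dom d → ℂ}
    (hf : MemA d f) (hg : MemA d g) (hh : MemA d h) {k : ℕ} (hk : 1 ≤ k) (s t : ℂ) :
    pip d (fun x => f x + s * h x) (fun x => g x + t * h x) k
      = ∑ i ∈ Finset.range (k+1), ∑ j ∈ Finset.range (k+1),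
          (starRingEnd ℂ) s ^ (k - i) * t ^ (k - j)
            * ((k.choose i : ℂ) * (k.choose j : ℂ)) * Jint d f g h k i j := by
  rw [pip]
  have hpt : ∀ x : Dom d,
      (starRingEnd ℂ) (f x + s * h x) ^ k * (g x + t * h x) ^ k
        = ∑ i ∈ Finset.range (k+1), ∑ j ∈ Finset.range (k+1),
            (starRingEnd ℂ) s ^ (k - i) * t ^ (k - j)
              * ((k.choose i : ℂ) * (k.choose j : ℂ))
              * ((starRingEnd ℂ) (f x) ^ i * (starRingEnd ℂ) (h x) ^ (k - i)
                  * g x ^ j * h x ^ (k - j)) := by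
    intro x
    have h1 : (starRingEnd ℂ) (f x + s * h x)
        = (starRingEnd ℂ) (f x) + (starRingEnd ℂ) s * (starRingEnd ℂ) (h x) := by
      simp
    rw [h1, add_pow, add_pow, Finset.sum_mul_sum]
    refine Finset.sum_congr rfl fun i hi => Finset.sum_congr rfl fun j hj => ?_
    ring
  rw [integral_congr_ae (Filter.Eventually.of_forall hpt)]
  rw [integral_finset_sum _ (fun i hi => integrable_finset_sum _ (fun j hj =>
    ((Jint_integrable d hf hg hh hk (Finset.mem_range_succ_iff.mp hi)
        (Finset.mem_range_succ_iff.mp hj)).const_mul _)))]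
  refine Finset.sum_congr rfl fun i hi => ?_
  rw [integral_finset_sum _ (fun j hj =>
    ((Jint_integrable d hf hg hh hk (Finset.mem_range_succ_iff.mp hi)
        (Finset.mem_range_succ_iff.mp hj)).const_mul _))]
  refine Finset.sum_congr rfl fun j hj => ?_
  rw [Jint, integral_const_mul]

end Polar
section Extract

set_option maxHeartbeats 2000000 in
lemma extract2 (A B : ℕ → ℕ → ℂ)
    (key : ∀ s t : ℂ,
      (∑ i ∈ Finset.range 3, ∑ j ∈ Finset.range 3,
        (starRingEnd ℂ) s ^ (2 - i) * t ^ (2 - j)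
          * ((Nat.choose 2 i : ℂ) * (Nat.choose 2 j : ℂ)) * A i j)
      = ∑ i ∈ Finset.range 3, ∑ j ∈ Finset.range 3,
        (starRingEnd ℂ) s ^ (2 - i) * t ^ (2 - j)
          * ((Nat.choose 2 i : ℂ) * (Nat.choose 2 j : ℂ)) * B i j) :
    A 1 1 = B 1 1 := by
  have h_one_one := key (1:ℂ) (1:ℂ)
  have h_one_mone := key (1:ℂ) (-1:ℂ)
  have h_one_two := key (1:ℂ) (2:ℂ)
  have h_one_mtwo := key (1:ℂ) (-2:ℂ)
  have h_mone_one := key (-1:ℂ) (1:ℂ)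
  have h_mone_mone := key (-1:ℂ) (-1:ℂ)
  have h_mone_two := key (-1:ℂ) (2:ℂ)
  have h_mone_mtwo := key (-1:ℂ) (-2:ℂ)
  have h_two_one := key (2:ℂ) (1:ℂ)
  have h_two_mone := key (2:ℂ) (-1:ℂ)
  have h_two_two := key (2:ℂ) (2:ℂ)
  have h_two_mtwo := key (2:ℂ) (-2:ℂ)
  have h_mtwo_one := key (-2:ℂ) (1:ℂ)
  have h_mtwo_mone := key (-2:ℂ) (-1:ℂ)
  have h_mtwo_two := key (-2:ℂ) (2:ℂ)
  have h_mtwo_mtwo := key (-2:ℂ) (-2:ℂ)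
  simp only [Finset.sum_range_succ, Finset.sum_range_zero, map_one, map_neg,
    map_ofNat, Nat.choose] at h_one_one h_one_mone h_one_two h_one_mtwo h_mone_one h_mone_mone h_mone_two h_mone_mtwo h_two_one h_two_mone h_two_two h_two_mtwo h_mtwo_one h_mtwo_mone h_mtwo_two h_mtwo_mtwo
  norm_num at h_one_one h_one_mone h_one_two h_one_mtwo h_mone_one h_mone_mone h_mone_two h_mone_mtwo h_two_one h_two_mone h_two_two h_two_mtwo h_mtwo_one h_mtwo_mone h_mtwo_two h_mtwo_mtwo
  linear_combination (1/9 : ℂ) * h_one_one + (-1/9 : ℂ) * h_one_mone + (-1/72 : ℂ) * h_one_two + (1/72 : ℂ) * h_one_mtwo + (-1/9 : ℂ) * h_mone_one + (1/9 : ℂ) * h_mone_mone + (1/72 : ℂ) * h_mone_two + (-1/72 : ℂ) * h_mone_mtwo + (-1/72 : ℂ) * h_two_one + (1/72 : ℂ) * h_two_mone + (1/576 : ℂ) * h_two_two + (-1/576 : ℂ) * h_two_mtwo + (1/72 : ℂ) * h_mtwo_one + (-1/72 : ℂ) * h_mtwo_mone + (-1/576 : ℂ) * h_mtwo_two + (1/576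 : ℂ) * h_mtwo_mtwo

set_option maxHeartbeats 2000000 in
lemma extract3 (A B : ℕ → ℕ → ℂ)
    (key : ∀ s t : ℂ,
      (∑ i ∈ Finset.range 4, ∑ j ∈ Finset.range 4,
        (starRingEnd ℂ) s ^ (3 - i) * t ^ (3 - j)
          * ((Nat.choose 3 i : ℂ) * (Nat.choose 3 j : ℂ)) * A i j)
      = ∑ i ∈ Finset.range 4, ∑ j ∈ Finset.range 4,
        (starRingEnd ℂ) s ^ (3 - i) * t ^ (3 - j)
          * ((Nat.choose 3 i : ℂ) * (Nat.choose 3 j : ℂ)) * B i j) :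
    A 2 2 = B 2 2 := by
  have h_one_one := key (1:ℂ) (1:ℂ)
  have h_one_mone := key (1:ℂ) (-1:ℂ)
  have h_one_two := key (1:ℂ) (2:ℂ)
  have h_one_mtwo := key (1:ℂ) (-2:ℂ)
  have h_mone_one := key (-1:ℂ) (1:ℂ)
  have h_mone_mone := key (-1:ℂ) (-1:ℂ)
  have h_mone_two := key (-1:ℂ) (2:ℂ)
  have h_mone_mtwo := key (-1:ℂ) (-2:ℂ)
  have h_two_one := key (2:ℂ) (1:ℂ)
  have h_two_mone := key (2:ℂ) (-1:ℂ)
  have h_two_two := key (2:ℂ) (2:ℂ)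
  have h_two_mtwo := key (2:ℂ) (-2:ℂ)
  have h_mtwo_one := key (-2:ℂ) (1:ℂ)
  have h_mtwo_mone := key (-2:ℂ) (-1:ℂ)
  have h_mtwo_two := key (-2:ℂ) (2:ℂ)
  have h_mtwo_mtwo := key (-2:ℂ) (-2:ℂ)
  simp only [Finset.sum_range_succ, Finset.sum_range_zero, map_one, map_neg,
    map_ofNat, Nat.choose] at h_one_one h_one_mone h_one_two h_one_mtwo h_mone_one h_mone_mone h_mone_two h_mone_mtwo h_two_one h_two_mone h_two_two h_two_mtwo h_mtwo_one h_mtwo_mone h_mtwo_two h_mtwo_mtwo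
  norm_num at h_one_one h_one_mone h_one_two h_one_mtwo h_mone_one h_mone_mone h_mone_two h_mone_mtwo h_two_one h_two_mone h_two_two h_two_mtwo h_mtwo_one h_mtwo_mone h_mtwo_two h_mtwo_mtwo
  linear_combination (4/81 : ℂ) * h_one_one + (-4/81 : ℂ) * h_one_mone + (-1/162 : ℂ) * h_one_two + (1/162 : ℂ) * h_one_mtwo + (-4/81 : ℂ) * h_mone_one + (4/81 : ℂ) * h_mone_mone + (1/162 : ℂ) * h_mone_two + (-1/162 : ℂ) * h_mone_mtwo + (-1/162 : ℂ) * h_two_one + (1/162 : ℂ) * h_two_mone + (1/1296 : ℂ) * h_two_two + (-1/1296 : ℂ) * h_two_mtwo + (1/162 : ℂ) * h_mtwo_one + (-1/162 : ℂ) * h_mtwo_mone + (-1/1296 : ℂ) * h_mtwo_two + (1/1296 : ℂ) * h_mtwo_mtwo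

end Extract
section Mixed

lemma mixed_moment (d : ℕ) (T : (Dom d → ℂ) → (Dom d → ℂ))
    (hTmem : ∀ f, MemA d f → MemA d (T f))
    (hTadd : ∀ f g, MemA d f → MemA d g →
      T (f + g) =ᵐ[(volume : Measure (Dom d))] T f + T g)
    (hTsmul : ∀ (a : ℂ) (f : Dom d → ℂ), MemA d f →
      T (a • f) =ᵐ[(volume : Measure (Dom d))] a • T f)
    (hpip : ∀ k : ℕ, 1 ≤ k → ∀ f g, MemA d f → MemA d g →
      pip d (T f) (T g) k = pip d f g k)
    {k : ℕ} (hk : k = 2 ∨ k = 3) {f g h : Dom d → ℂ}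
    (hf : MemA d f) (hg : MemA d g) (hh : MemA d h) :
    Jint d (T f) (T g) (T h) k (k-1) (k-1) = Jint d f g h k (k-1) (k-1) := by
  have hk1 : 1 ≤ k := by rcases hk with rfl | rfl <;> norm_num
  have key : ∀ s t : ℂ,
      (∑ i ∈ Finset.range (k+1), ∑ j ∈ Finset.range (k+1),
        (starRingEnd ℂ) s ^ (k - i) * t ^ (k - j)
          * ((k.choose i : ℂ) * (k.choose j : ℂ)) * Jint d (T f) (T g) (T h) k i j)
      = ∑ i ∈ Finset.range (k+1), ∑ j ∈ Finset.range (k+1),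
        (starRingEnd ℂ) s ^ (k - i) * t ^ (k - j)
          * ((k.choose i : ℂ) * (k.choose j : ℂ)) * Jint d f g h k i j := by
    intro s t
    rw [← pip_expand d (hTmem f hf) (hTmem g hg) (hTmem h hh) hk1 s t,
        ← pip_expand d hf hg hh hk1 s t]
    have e1 : T (f + s • h) =ᵐ[(volume : Measure (Dom d))] (fun x => T f x + s * T h x) := by
      filter_upwards [hTadd f (s • h) hf (memA_smul s hh), hTsmul s h hh] with x hx1 hx2
      simp only [Pi.add_apply] at hx1 ⊢
      rw [hx1, hx2]; simp
    have e2 : T (g + t • h) =ᵐ[(volume : Measure (Dom d))] (fun x => T g x + t * T h x) := by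
      filter_upwards [hTadd g (t • h) hg (memA_smul t hh), hTsmul t h hh] with x hx1 hx2
      simp only [Pi.add_apply] at hx1 ⊢
      rw [hx1, hx2]; simp
    have e1' : (f + s • h) = (fun x => f x + s * h x) := by funext x; simp
    have e2' : (g + t • h) = (fun x => g x + t * h x) := by funext x; simp
    calc pip d (fun x => T f x + s * T h x) (fun x => T g x + t * T h x) k
        = pip d (T (f + s • h)) (T (g + t • h)) k := (pip_congr_ae d e1 e2 k).symm
      _ = pip d (f + s • h) (g + t • h) k :=
          hpip k hk1 _ _ (memA_add hf (memA_smul s hh)) (memA_add hg (memA_smul t hh))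
      _ = pip d (fun x => f x + s * h x) (fun x => g x + t * h x) k := by rw [e1', e2']
  rcases hk with rfl | rfl
  · exact extract2 _ _ key
  · exact extract3 _ _ key

end Mixed
section Helpers

lemma memA_unit_mul {d : ℕ} {ph : Dom d → ℂ} (hphm : Measurable ph)
    (hph1 : ∀ x, ‖ph x‖ = 1) {v : Dom d → ℂ} (hv : MemA d v) :
    MemA d (fun x => ph x * v x) := by
  have hnorm : ∀ p : ℝ≥0∞, MemLp v p (volume : Measure (Dom d)) →
      MemLp (fun x => ph x * v x) p (volume : Measure (Dom d)) := by
    intro p hp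
    refine ⟨hphm.aestronglyMeasurable.mul hp.1, ?_⟩
    rw [eLpNorm_congr_norm_ae (g := v) (Filter.Eventually.of_forall fun x => by
      rw [norm_mul, hph1 x, one_mul])]
    exact hp.2
  exact ⟨hnorm 2 hv.1, hnorm ⊤ hv.2⟩

lemma memA_indicator {d : ℕ} {S : Set (Dom d)} (hS : MeasurableSet S)
    (hfin : (volume : Measure (Dom d)) S < ⊤) :
    MemA d (S.indicator fun _ => (1 : ℂ)) :=
  ⟨memLp_indicator_const 2 hS 1 (Or.inr hfin.ne),
   memLp_indicator_const ⊤ hS 1 (Or.inr hfin.ne)⟩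

lemma phase_key (a b : ℂ) (ha : a ≠ 0) (hb : b ≠ 0)
    (hE1 : (starRingEnd ℂ) b * b = (starRingEnd ℂ) a ^ 2 * a ^ 2)
    (hE2 : (starRingEnd ℂ) b * b * a = (starRingEnd ℂ) a * b ^ 2) :
    Complex.exp (-(Complex.I * ((a ^ 2 * (starRingEnd ℂ) b).arg : ℂ))) * a ^ 2 = b ∧
    Complex.exp (-(Complex.I * ((a ^ 2 * (starRingEnd ℂ) b).arg : ℂ))) * a =
      (starRingEnd ℂ) (Complex.exp (-(Complex.I * ((a ^ 2 * (starRingEnd ℂ) b).arg : ℂ))))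
        * (starRingEnd ℂ) a := by
  classical
  have hcb : (starRingEnd ℂ) b ≠ 0 := by
    intro h; exact hb (by simpa using congrArg (starRingEnd ℂ) h)
  have hca : (starRingEnd ℂ) a ≠ 0 := by
    intro h; exact ha (by simpa using congrArg (starRingEnd ℂ) h)
  set z : ℂ := a ^ 2 * (starRingEnd ℂ) b with hz
  set m : ℂ := Complex.exp (-(Complex.I * (z.arg : ℂ))) with hm
  have hzne : z ≠ 0 := mul_ne_zero (pow_ne_zero _ ha) hcb
  have e := Complex.norm_mul_exp_arg_mul_I z
  have hmz : m * z = (‖z‖ : ℂ) := by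
    calc m * z = m * ((‖z‖ : ℂ) * Complex.exp ((z.arg : ℂ) * Complex.I)) := by
          rw [e]
      _ = (‖z‖ : ℂ) *
            (Complex.exp (-(Complex.I * (z.arg : ℂ))) * Complex.exp ((z.arg : ℂ) * Complex.I)) := by
          rw [hm]; ring
      _ = (‖z‖ : ℂ) *
            Complex.exp (-(Complex.I * (z.arg : ℂ)) + (z.arg : ℂ) * Complex.I) := by
          rw [Complex.exp_add]
      _ = (‖z‖ : ℂ) := by
          rw [show -(Complex.I * (z.arg : ℂ)) + (z.arg : ℂ) * Complex.I = 0 by ring,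
            Complex.exp_zero, mul_one]
  have h1 : Complex.normSq b = Complex.normSq (a ^ 2) := by
    have h1' : ((Complex.normSq b : ℝ) : ℂ) = ((Complex.normSq (a ^ 2) : ℝ) : ℂ) := by
      rw [← Complex.mul_conj, ← Complex.mul_conj, map_pow]
      linear_combination hE1
    exact_mod_cast h1'
  have habs' : ‖b‖ = ‖a ^ 2‖ := by
    rw [Complex.norm_def, Complex.norm_def, h1]
  have h2 : ‖z‖ = ‖b‖ * ‖b‖ := by
    rw [hz, norm_mul, Complex.norm_conj, ← habs']
  have habs : ((‖z‖ : ℝ) : ℂ) = (starRingEnd ℂ) b * b := by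
    rw [h2, show ‖b‖ * ‖b‖ = Complex.normSq b by
      rw [← Complex.sq_norm]; ring]
    rw [← Complex.mul_conj]
    exact mul_comm _ _
  have hE2' : (starRingEnd ℂ) b * a = (starRingEnd ℂ) a * b :=
    mul_left_cancel₀ hb (by linear_combination hE2)
  have hmval : m = ((starRingEnd ℂ) b * b) / z := by
    rw [← habs, ← hmz]
    field_simp
  constructor
  · rw [hmval, hz]
    field_simp
  · rw [hmval, hz]
    simp only [map_div₀, map_mul, map_pow, Complex.conj_conj]
    rw [div_mul_eq_mul_div, div_mul_eq_mul_div,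
      div_eq_div_iff (mul_ne_zero (pow_ne_zero 2 ha) hcb) (mul_ne_zero (pow_ne_zero 2 hca) hb)]
    linear_combination (-((starRingEnd ℂ) b * b * a * (starRingEnd ℂ) a)) * hE2'

lemma unit_abs_exp (θ : ℝ) : ‖Complex.exp (-(Complex.I * (θ : ℂ)))‖ = 1 := by
  rw [Complex.norm_exp]
  simp

lemma conj_mul_exp_unit (θ : ℝ) :
    (starRingEnd ℂ) (Complex.exp (-(Complex.I * (θ : ℂ)))) *
      Complex.exp (-(Complex.I * (θ : ℂ))) = 1 := by
  rw [← Complex.exp_conj, ← Complex.exp_add]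
  rw [show (starRingEnd ℂ) (-(Complex.I * (θ : ℂ))) + -(Complex.I * (θ : ℂ)) = 0 by
    rw [map_neg, map_mul, Complex.conj_I, Complex.conj_ofReal]; ring]
  exact Complex.exp_zero

lemma exp_mul_exp_unit (θ : ℝ) :
    Complex.exp (Complex.I * (θ : ℂ)) * Complex.exp (-(Complex.I * (θ : ℂ))) = 1 := by
  rw [← Complex.exp_add, show Complex.I * (θ:ℂ) + -(Complex.I * (θ:ℂ)) = 0 by ring]
  exact Complex.exp_zero

lemma conj_exp_unit (θ : ℝ) :
    (starRingEnd ℂ) (Complex.exp (Complex.I * (θ : ℂ))) * Complex.exp (Complex.I * (θ : ℂ)) = 1 := by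
  rw [← Complex.exp_conj, ← Complex.exp_add,
    show (starRingEnd ℂ) (Complex.I * (θ : ℂ)) + Complex.I * (θ : ℂ) = 0 by
      rw [map_mul, Complex.conj_I, Complex.conj_ofReal]; ring]
  exact Complex.exp_zero

end Helpers
section Testing

/-- If an integrable function integrates to zero against `conj (T h) * T h`
for every `h ∈ 𝒜`, and `T` is a.e.-surjective onto `𝒜`, then it vanishes a.e. -/
lemma ae_zero_of_tests (d : ℕ) (T : (Dom d → ℂ) → (Dom d → ℂ))
    (hsurj : ∀ g, MemA d g → ∃ f, MemA d f ∧ T f =ᵐ[(volume : Measure (Dom d))] g)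
    {v : Dom d → ℂ} (hv : Integrable v (volume : Measure (Dom d)))
    (htest : ∀ h, MemA d h →
      ∫ x : Dom d, v x * ((starRingEnd ℂ) (T h x) * T h x) = 0) :
    v =ᵐ[(volume : Measure (Dom d))] 0 := by
  apply hv.ae_eq_zero_of_forall_setIntegral_eq_zero
  intro S hS hSfin
  obtain ⟨h, hhA, hTh⟩ := hsurj (S.indicator fun _ => (1 : ℂ)) (memA_indicator hS hSfin)
  have hcongr : ∫ x : Dom d, v x * ((starRingEnd ℂ) (T h x) * T h x)
      = ∫ x in S, v x ∂(volume : Measure (Dom d)) := by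
    rw [← integral_indicator hS]
    apply integral_congr_ae
    filter_upwards [hTh] with x hx
    rw [hx]
    by_cases hxS : x ∈ S
    · simp [Set.indicator_of_mem hxS]
    · simp [Set.indicator_of_notMem hxS]
  rw [← hcongr]
  exact htest h hhA

end Testing
section Derived

variable {d : ℕ}

lemma moment2 (d : ℕ) (T : (Dom d → ℂ) → (Dom d → ℂ))
    (hTmem : ∀ f, MemA d f → MemA d (T f))
    (hTadd : ∀ f g, MemA d f → MemA d g →
      T (f + g) =ᵐ[(volume : Measure (Dom d))] T f + T g)
    (hTsmul : ∀ (a : ℂ) (f : Dom d → ℂ), MemA d f →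
      T (a • f) =ᵐ[(volume : Measure (Dom d))] a • T f)
    (hpip : ∀ k : ℕ, 1 ≤ k → ∀ f g, MemA d f → MemA d g →
      pip d (T f) (T g) k = pip d f g k)
    (p q h : Dom d → ℂ) (hp : MemA d p) (hq : MemA d q) (hh : MemA d h) :
    ∫ x : Dom d, (starRingEnd ℂ) (T p x) * T q x * ((starRingEnd ℂ) (T h x) * T h x)
      = ∫ x : Dom d, (starRingEnd ℂ) (p x) * q x * ((starRingEnd ℂ) (h x) * h x) := by
  have H := mixed_moment d T hTmem hTadd hTsmul hpip (Or.inl rfl) hp hq hh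
  rw [Jint, Jint] at H
  simp only [show (2:ℕ)-1 = 1 from rfl, pow_one] at H
  calc ∫ x : Dom d, (starRingEnd ℂ) (T p x) * T q x * ((starRingEnd ℂ) (T h x) * T h x)
      = ∫ x : Dom d, (starRingEnd ℂ) (T p x) * (starRingEnd ℂ) (T h x) * T q x * T h x :=
        integral_congr_ae (Filter.Eventually.of_forall fun x => by ring)
    _ = ∫ x : Dom d, (starRingEnd ℂ) (p x) * (starRingEnd ℂ) (h x) * q x * h x := H
    _ = ∫ x : Dom d, (starRingEnd ℂ) (p x) * q x * ((starRingEnd ℂ) (h x) * h x) :=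
        integral_congr_ae (Filter.Eventually.of_forall fun x => by ring)

lemma moment3 (d : ℕ) (T : (Dom d → ℂ) → (Dom d → ℂ))
    (hTmem : ∀ f, MemA d f → MemA d (T f))
    (hTadd : ∀ f g, MemA d f → MemA d g →
      T (f + g) =ᵐ[(volume : Measure (Dom d))] T f + T g)
    (hTsmul : ∀ (a : ℂ) (f : Dom d → ℂ), MemA d f →
      T (a • f) =ᵐ[(volume : Measure (Dom d))] a • T f)
    (hpip : ∀ k : ℕ, 1 ≤ k → ∀ f g, MemA d f → MemA d g →
      pip d (T f) (T g) k = pip d f g k)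
    (h : Dom d → ℂ) (hh : MemA d h) :
    ∫ x : Dom d, (starRingEnd ℂ) (T (eG d) x) ^ 2 * T (eG d) x ^ 2
        * ((starRingEnd ℂ) (T h x) * T h x)
      = ∫ x : Dom d, (starRingEnd ℂ) (eG d x) ^ 2 * eG d x ^ 2
        * ((starRingEnd ℂ) (h x) * h x) := by
  have H := mixed_moment d T hTmem hTadd hTsmul hpip (Or.inr rfl) (eG_memA d) (eG_memA d) hh
  rw [Jint, Jint] at H
  simp only [show (3:ℕ)-2 = 1 from rfl, pow_one] at H
  calc ∫ x : Dom d, (starRingEnd ℂ) (T (eG d) x) ^ 2 * T (eG d) x ^ 2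
        * ((starRingEnd ℂ) (T h x) * T h x)
      = ∫ x : Dom d, (starRingEnd ℂ) (T (eG d) x) ^ 2 * (starRingEnd ℂ) (T h x)
          * T (eG d) x ^ 2 * T h x :=
        integral_congr_ae (Filter.Eventually.of_forall fun x => by ring)
    _ = ∫ x : Dom d, (starRingEnd ℂ) (eG d x) ^ 2 * (starRingEnd ℂ) (h x) * eG d x ^ 2 * h x := H
    _ = ∫ x : Dom d, (starRingEnd ℂ) (eG d x) ^ 2 * eG d x ^ 2
          * ((starRingEnd ℂ) (h x) * h x) :=
        integral_congr_ae (Filter.Eventually.of_forall fun x => by ring)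

lemma integrable4 {A B C D : Dom d → ℂ} (hA : MemA d A) (hB : MemA d B)
    (hC : MemA d C) (hD : MemA d D) :
    Integrable (fun x => (starRingEnd ℂ) (A x) * B x * ((starRingEnd ℂ) (C x) * D x))
      (volume : Measure (Dom d)) := by
  have hrw : (fun x => (starRingEnd ℂ) (A x) * B x * ((starRingEnd ℂ) (C x) * D x))
      = fun x => (starRingEnd ℂ) (A x * C x) * (B x * D x) := by
    funext x; rw [map_mul]; ring
  rw [hrw]
  exact integrable_mul_L2 (memA_conj (hA.mul2 hC)).1 (hB.mul2 hD).1

lemma pair_eq (d : ℕ) (T : (Dom d → ℂ) → (Dom d → ℂ))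
    (hTmem : ∀ f, MemA d f → MemA d (T f))
    (hTadd : ∀ f g, MemA d f → MemA d g →
      T (f + g) =ᵐ[(volume : Measure (Dom d))] T f + T g)
    (hTsmul : ∀ (a : ℂ) (f : Dom d → ℂ), MemA d f →
      T (a • f) =ᵐ[(volume : Measure (Dom d))] a • T f)
    (hpip : ∀ k : ℕ, 1 ≤ k → ∀ f g, MemA d f → MemA d g →
      pip d (T f) (T g) k = pip d f g k)
    (hsurj : ∀ g, MemA d g → ∃ f, MemA d f ∧ T f =ᵐ[(volume : Measure (Dom d))] g)
    {f₁ g₁ f₂ g₂ : Dom d → ℂ} (h1 : MemA d f₁) (h2 : MemA d g₁)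
    (h3 : MemA d f₂) (h4 : MemA d g₂)
    (heq : (fun x => (starRingEnd ℂ) (f₁ x) * g₁ x)
      = (fun x => (starRingEnd ℂ) (f₂ x) * g₂ x)) :
    (fun x => (starRingEnd ℂ) (T f₁ x) * T g₁ x)
      =ᵐ[(volume : Measure (Dom d))] (fun x => (starRingEnd ℂ) (T f₂ x) * T g₂ x) := by
  have i1 := integrable_mul_L2 (memA_conj (hTmem f₁ h1)).1 (hTmem g₁ h2).1
  have i2 := integrable_mul_L2 (memA_conj (hTmem f₂ h3)).1 (hTmem g₂ h4).1
  have hz := ae_zero_of_tests d T hsurj (v := fun x =>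
      (starRingEnd ℂ) (T f₁ x) * T g₁ x - (starRingEnd ℂ) (T f₂ x) * T g₂ x)
    (i1.sub i2) ?tests
  · filter_upwards [hz] with x hx
    simp only [Pi.zero_apply] at hx
    exact sub_eq_zero.mp hx
  case tests =>
    intro h hh
    have j1 := integrable4 (hTmem f₁ h1) (hTmem g₁ h2) (hTmem h hh) (hTmem h hh)
    have j2 := integrable4 (hTmem f₂ h3) (hTmem g₂ h4) (hTmem h hh) (hTmem h hh)
    calc ∫ x : Dom d, ((starRingEnd ℂ) (T f₁ x) * T g₁ x
            - (starRingEnd ℂ) (T f₂ x) * T g₂ x) * ((starRingEnd ℂ) (T h x) * T h x)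
        = ∫ x : Dom d, ((starRingEnd ℂ) (T f₁ x) * T g₁ x * ((starRingEnd ℂ) (T h x) * T h x)
            - (starRingEnd ℂ) (T f₂ x) * T g₂ x * ((starRingEnd ℂ) (T h x) * T h x)) :=
          integral_congr_ae (Filter.Eventually.of_forall fun x => by ring)
      _ = (∫ x : Dom d, (starRingEnd ℂ) (T f₁ x) * T g₁ x * ((starRingEnd ℂ) (T h x) * T h x))
            - ∫ x : Dom d, (starRingEnd ℂ) (T f₂ x) * T g₂ x
                * ((starRingEnd ℂ) (T h x) * T h x) := integral_sub j1 j2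
      _ = (∫ x : Dom d, (starRingEnd ℂ) (f₁ x) * g₁ x * ((starRingEnd ℂ) (h x) * h x))
            - ∫ x : Dom d, (starRingEnd ℂ) (f₂ x) * g₂ x * ((starRingEnd ℂ) (h x) * h x) := by
          rw [moment2 d T hTmem hTadd hTsmul hpip f₁ g₁ h h1 h2 hh,
            moment2 d T hTmem hTadd hTsmul hpip f₂ g₂ h h3 h4 hh]
      _ = 0 := by
          rw [show (fun x : Dom d => (starRingEnd ℂ) (f₁ x) * g₁ x
              * ((starRingEnd ℂ) (h x) * h x))
              = (fun x : Dom d => (starRingEnd ℂ) (f₂ x) * g₂ x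
                * ((starRingEnd ℂ) (h x) * h x)) from funext fun x => by
            rw [congrFun heq x]]
          exact sub_self _

end Derived
section NonVanishing

lemma T_nonvanishing (d : ℕ) (T : (Dom d → ℂ) → (Dom d → ℂ))
    (hTmem : ∀ f, MemA d f → MemA d (T f))
    (hTae : ∀ f g, MemA d f → MemA d g → f =ᵐ[(volume : Measure (Dom d))] g →
      T f =ᵐ[(volume : Measure (Dom d))] T g)
    (hTadd : ∀ f g, MemA d f → MemA d g →
      T (f + g) =ᵐ[(volume : Measure (Dom d))] T f + T g)
    (hTsmul : ∀ (a : ℂ) (f : Dom d → ℂ), MemA d f →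
      T (a • f) =ᵐ[(volume : Measure (Dom d))] a • T f)
    (hpip : ∀ k : ℕ, 1 ≤ k → ∀ f g, MemA d f → MemA d g →
      pip d (T f) (T g) k = pip d f g k)
    (hsurj : ∀ g, MemA d g → ∃ f, MemA d f ∧ T f =ᵐ[(volume : Measure (Dom d))] g)
    (q : Dom d → ℂ) (B : Dom d → ℝ) (hqB : ∀ x, q x = ((B x : ℝ) : ℂ))
    (hBpos : ∀ x, 0 < B x) (hqA : MemA d q) :
    ∀ᵐ x ∂(volume : Measure (Dom d)), T q x ≠ 0 := by
  classical
  have hT0 : T 0 =ᵐ[(volume : Measure (Dom d))] (0 : Dom d → ℂ) := by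
    have h00 := hTsmul 0 0 memA_zero
    rw [zero_smul] at h00
    refine h00.trans ?_
    filter_upwards with x
    simp
  have hsm := (hTmem q hqA).1.1
  set P : Dom d → ℂ := hsm.mk (T q) with hP
  have hPm : Measurable P := hsm.stronglyMeasurable_mk.measurable
  have hPe : T q =ᵐ[(volume : Measure (Dom d))] P := hsm.ae_eq_mk
  set Z : Set (Dom d) := P ⁻¹' {0} with hZ
  have hZm : MeasurableSet Z := hPm (measurableSet_singleton 0)
  have hZn : ∀ n : ℕ, (volume : Measure (Dom d)) (Z ∩ spanningSets volume n) = 0 := by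
    intro n
    set S : Set (Dom d) := Z ∩ spanningSets volume n with hSdef
    have hSm : MeasurableSet S := hZm.inter (measurableSet_spanningSets _ n)
    have hSfin : (volume : Measure (Dom d)) S < ⊤ :=
      lt_of_le_of_lt (measure_mono Set.inter_subset_right) (measure_spanningSets_lt_top _ n)
    obtain ⟨h, hhA, hTh⟩ := hsurj _ (memA_indicator hSm hSfin)
    have hmom := moment2 d T hTmem hTadd hTsmul hpip q q h hqA hqA hhA
    have hL : ∫ x : Dom d, (starRingEnd ℂ) (T q x) * T q x
        * ((starRingEnd ℂ) (T h x) * T h x) = 0 := by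
      have hae0 : (fun x => (starRingEnd ℂ) (T q x) * T q x
          * ((starRingEnd ℂ) (T h x) * T h x))
          =ᵐ[(volume : Measure (Dom d))] (fun _ => (0 : ℂ)) := by
        filter_upwards [hPe, hTh] with x hx1 hx2
        by_cases hxS : x ∈ S
        · have hPx : P x = 0 := hxS.1
          rw [hx1, hPx]
          ring
        · rw [hx2, Set.indicator_of_notMem hxS]
          ring
      rw [integral_congr_ae hae0, integral_zero]
    have hptw : ∀ x : Dom d, (starRingEnd ℂ) (q x) * q x * ((starRingEnd ℂ) (h x) * h x)
        = ((B x ^ 2 * Complex.normSq (h x) : ℝ) : ℂ) := by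
      intro x
      rw [hqB x, Complex.conj_ofReal,
        show (starRingEnd ℂ) (h x) * h x = ((Complex.normSq (h x) : ℝ) : ℂ) by
          rw [mul_comm, Complex.mul_conj]]
      push_cast
      ring
    have hR : ∫ x : Dom d, (starRingEnd ℂ) (q x) * q x * ((starRingEnd ℂ) (h x) * h x)
        = ((∫ x : Dom d, B x ^ 2 * Complex.normSq (h x) : ℝ) : ℂ) := by
      rw [integral_congr_ae (Filter.Eventually.of_forall fun x => hptw x)]
      exact integral_ofReal
    have hint : Integrable (fun x => B x ^ 2 * Complex.normSq (h x))
        (volume : Measure (Dom d)) := by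
      have icplx := integrable4 hqA hqA hhA hhA
      refine icplx.norm.congr (Filter.Eventually.of_forall fun x => ?_)
      show ‖(starRingEnd ℂ) (q x) * q x * ((starRingEnd ℂ) (h x) * h x)‖
        = B x ^ 2 * Complex.normSq (h x)
      rw [hptw x, Complex.norm_real, Real.norm_eq_abs,
        _root_.abs_of_nonneg (mul_nonneg (sq_nonneg (B x)) (Complex.normSq_nonneg (h x)))]
    have h0 : ∫ x : Dom d, B x ^ 2 * Complex.normSq (h x) = 0 := by
      have : ((∫ x : Dom d, B x ^ 2 * Complex.normSq (h x) : ℝ) : ℂ) = 0 := by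
        rw [← hR, ← hmom, hL]
      exact_mod_cast this
    have hae := (integral_eq_zero_iff_of_nonneg
      (fun x => by simpa using mul_nonneg (sq_nonneg (B x)) (Complex.normSq_nonneg (h x)))
      hint).mp h0
    have hh0 : h =ᵐ[(volume : Measure (Dom d))] (0 : Dom d → ℂ) := by
      filter_upwards [hae] with x hx
      simp only [Pi.zero_apply] at hx ⊢
      have hB2 : B x ^ 2 ≠ 0 := pow_ne_zero 2 (hBpos x).ne'
      rcases mul_eq_zero.mp hx with hx' | hx'
      · exact absurd hx' hB2
      · exact Complex.normSq_eq_zero.mp hx'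
    have hTh0 : T h =ᵐ[(volume : Measure (Dom d))] (0 : Dom d → ℂ) :=
      (hTae h 0 hhA memA_zero hh0).trans hT0
    have hind : (S.indicator (fun _ => (1 : ℂ)))
        =ᵐ[(volume : Measure (Dom d))] (0 : Dom d → ℂ) := hTh.symm.trans hTh0
    have hSsub : S ⊆ {x | ¬ (S.indicator (fun _ => (1 : ℂ)) x = (0 : Dom d → ℂ) x)} := by
      intro x hx
      simp only [Set.mem_setOf_eq, Set.indicator_of_mem hx, Pi.zero_apply]
      exact one_ne_zero
    exact measure_mono_null hSsub (ae_iff.mp hind)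
  have hZ0 : (volume : Measure (Dom d)) Z = 0 := by
    have hcover : Z = ⋃ n, Z ∩ spanningSets (volume : Measure (Dom d)) n := by
      rw [← Set.inter_iUnion, iUnion_spanningSets, Set.inter_univ]
    rw [hcover]
    exact measure_iUnion_null hZn
  filter_upwards [hPe, measure_eq_zero_iff_ae_notMem.mp hZ0] with x hx1 hx2
  intro hzero
  exact hx2 (by
    rw [hZ, Set.mem_preimage, Set.mem_singleton_iff, ← hx1]
    exact hzero)

end NonVanishing
section Forward

lemma forward_dir (d : ℕ) (T : (Dom d → ℂ) → (Dom d → ℂ))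
    (hTmem : ∀ f, MemA d f → MemA d (T f))
    (hTae : ∀ f g, MemA d f → MemA d g → f =ᵐ[(volume : Measure (Dom d))] g →
      T f =ᵐ[(volume : Measure (Dom d))] T g)
    (hTadd : ∀ f g, MemA d f → MemA d g →
      T (f + g) =ᵐ[(volume : Measure (Dom d))] T f + T g)
    (hTsmul : ∀ (a : ℂ) (f : Dom d → ℂ), MemA d f →
      T (a • f) =ᵐ[(volume : Measure (Dom d))] a • T f)
    (hpip : ∀ k : ℕ, 1 ≤ k → ∀ f g, MemA d f → MemA d g →
      pip d (T f) (T g) k = pip d f g k)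
    (hsurj : ∀ g, MemA d g → ∃ f, MemA d f ∧ T f =ᵐ[(volume : Measure (Dom d))] g) :
    ∃ (α : Dom d → ℝ) (T₁ : (Dom d → ℂ) → (Dom d → ℂ)),
      Measurable α ∧ IsStarAuto d T₁ ∧
      ∀ f, MemA d f → T f =ᵐ[(volume : Measure (Dom d))]
        fun x => Complex.exp (Complex.I * α x) * T₁ f x := by
  classical
  have heA : MemA d (eG d) := eG_memA d
  have he2A : MemA d (fun y => eG d y * eG d y) := heA.mul2 heA
  have huA : MemA d (T (eG d)) := hTmem _ heA
  have hwA : MemA d (T (fun y => eG d y * eG d y)) := hTmem _ he2A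
  -- F1 : inner products are preserved
  have F1 : ∀ f g, MemA d f → MemA d g →
      ∫ x : Dom d, (starRingEnd ℂ) (T f x) * T g x
        = ∫ x : Dom d, (starRingEnd ℂ) (f x) * g x := by
    intro f g hf hg
    have := hpip 1 le_rfl f g hf hg
    simpa [pip, pow_one] using this
  -- nonvanishing of T e and T e²
  have hu_nz : ∀ᵐ x ∂(volume : Measure (Dom d)), T (eG d) x ≠ 0 :=
    T_nonvanishing d T hTmem hTae hTadd hTsmul hpip hsurj (eG d) (Efun d)
      (fun x => rfl) Efun_pos heA
  have hw_nz : ∀ᵐ x ∂(volume : Measure (Dom d)), T (fun y => eG d y * eG d y) x ≠ 0 :=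
    T_nonvanishing d T hTmem hTae hTadd hTsmul hpip hsurj _
      (fun y => Efun d y * Efun d y)
      (fun x => by simp only [eG]; push_cast; ring)
      (fun x => mul_pos (Efun_pos x) (Efun_pos x)) he2A
  -- (II)
  have hII : ∀ f, MemA d f →
      (fun x => (starRingEnd ℂ) (T (fun y => (starRingEnd ℂ) (f y)) x) * T (eG d) x)
        =ᵐ[(volume : Measure (Dom d))]
      (fun x => (starRingEnd ℂ) (T (eG d) x) * T f x) := by
    intro f hf
    exact pair_eq d T hTmem hTadd hTsmul hpip hsurj (memA_conj hf) heA heA hf (funext fun x => by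
      simp only [Complex.conj_conj, eG_conj]
      ring)
  -- (IIIa)
  have hIIIa : ∀ f g, MemA d f → MemA d g →
      (fun x => (starRingEnd ℂ) (T (fun y => (starRingEnd ℂ) (f y * g y)) x) * T (eG d) x)
        =ᵐ[(volume : Measure (Dom d))]
      (fun x => (starRingEnd ℂ) (T (fun y => (starRingEnd ℂ) (f y)) x)
        * T (fun y => g y * eG d y) x) := by
    intro f g hf hg
    exact pair_eq d T hTmem hTadd hTsmul hpip hsurj (memA_conj (hf.mul2 hg)) heA (memA_conj hf) (hg.mul2 heA)
      (funext fun x => by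
        simp only [Complex.conj_conj]
        ring)
  -- (P2)
  have hP2 : (fun x => (starRingEnd ℂ) (T (fun y => eG d y * eG d y) x)
        * T (fun y => eG d y * eG d y) x)
      =ᵐ[(volume : Measure (Dom d))]
      (fun x => (starRingEnd ℂ) (T (eG d) x)
        * T (fun y => (eG d y * eG d y) * eG d y) x) := by
    refine pair_eq d T hTmem hTadd hTsmul hpip hsurj he2A he2A heA ((he2A.mul2 heA : MemA d _)) (funext fun x => by
      simp only [eG_conj, map_mul]
      ring)
  -- modulus identity |T e²|² = |T e|⁴
  have hMOD : (fun x => (starRingEnd ℂ) (T (fun y => eG d y * eG d y) x)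
        * T (fun y => eG d y * eG d y) x)
      =ᵐ[(volume : Measure (Dom d))]
      (fun x => (starRingEnd ℂ) (T (eG d) x) ^ 2 * T (eG d) x ^ 2) := by
    have i1 := integrable_mul_L2 (memA_conj hwA).1 hwA.1
    have i2 : Integrable (fun x => (starRingEnd ℂ) (T (eG d) x) ^ 2 * T (eG d) x ^ 2)
        (volume : Measure (Dom d)) := by
      have := integrable_mul_L2 (memA_conj (huA.mul2 huA)).1 (huA.mul2 huA).1
      refine this.congr (Filter.Eventually.of_forall fun x => ?_)
      simp only [map_mul]
      ring
    have hz := ae_zero_of_tests d T hsurj (v := fun x =>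
        (starRingEnd ℂ) (T (fun y => eG d y * eG d y) x) * T (fun y => eG d y * eG d y) x
          - (starRingEnd ℂ) (T (eG d) x) ^ 2 * T (eG d) x ^ 2)
      (i1.sub i2) ?tests
    · filter_upwards [hz] with x hx
      simp only [Pi.zero_apply] at hx
      exact sub_eq_zero.mp hx
    case tests =>
      intro h hh
      have j1 := integrable4 hwA hwA (hTmem h hh) (hTmem h hh)
      have j2 : Integrable (fun x => (starRingEnd ℂ) (T (eG d) x) ^ 2 * T (eG d) x ^ 2
          * ((starRingEnd ℂ) (T h x) * T h x)) (volume : Measure (Dom d)) := by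
        have := integrable4 (huA.mul2 huA) (huA.mul2 huA) (hTmem h hh) (hTmem h hh)
        refine this.congr (Filter.Eventually.of_forall fun x => ?_)
        simp only [map_mul]
        ring
      calc ∫ x : Dom d, ((starRingEnd ℂ) (T (fun y => eG d y * eG d y) x)
              * T (fun y => eG d y * eG d y) x
            - (starRingEnd ℂ) (T (eG d) x) ^ 2 * T (eG d) x ^ 2)
            * ((starRingEnd ℂ) (T h x) * T h x)
          = ∫ x : Dom d, ((starRingEnd ℂ) (T (fun y => eG d y * eG d y) x)
              * T (fun y => eG d y * eG d y) x * ((starRingEnd ℂ) (T h x) * T h x)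
            - (starRingEnd ℂ) (T (eG d) x) ^ 2 * T (eG d) x ^ 2
              * ((starRingEnd ℂ) (T h x) * T h x)) :=
            integral_congr_ae (Filter.Eventually.of_forall fun x => by ring)
        _ = (∫ x : Dom d, (starRingEnd ℂ) (T (fun y => eG d y * eG d y) x)
              * T (fun y => eG d y * eG d y) x * ((starRingEnd ℂ) (T h x) * T h x))
            - ∫ x : Dom d, (starRingEnd ℂ) (T (eG d) x) ^ 2 * T (eG d) x ^ 2
              * ((starRingEnd ℂ) (T h x) * T h x) := integral_sub j1 j2
        _ = 0 := by
            rw [moment2 d T hTmem hTadd hTsmul hpip _ _ h he2A he2A hh,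
              moment3 d T hTmem hTadd hTsmul hpip h hh]
            rw [show (fun x : Dom d => (starRingEnd ℂ) ((fun y => eG d y * eG d y) x)
                * (fun y => eG d y * eG d y) x * ((starRingEnd ℂ) (h x) * h x))
                = (fun x : Dom d => (starRingEnd ℂ) (eG d x) ^ 2 * eG d x ^ 2
                  * ((starRingEnd ℂ) (h x) * h x)) from funext fun x => by
              simp only [map_mul]
              ring]
            exact sub_self _
  -- (M0) : u² T(fg) = Tf Tg w
  have hM0 : ∀ f g, MemA d f → MemA d g →
      ∀ᵐ x ∂(volume : Measure (Dom d)),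
        (T (eG d) x) ^ 2 * T (fun y => f y * g y) x
          = T f x * T g x * T (fun y => eG d y * eG d y) x := by
    intro f g hf hg
    have Ea := hIIIa f g hf hg
    have Eb : (fun x => (starRingEnd ℂ) (T (fun y => (starRingEnd ℂ) (f y * g y)) x)
          * T (eG d) x)
        =ᵐ[(volume : Measure (Dom d))]
        (fun x => (starRingEnd ℂ) (T (eG d) x) * T (fun y => f y * g y) x) :=
      hII (fun y => f y * g y) (hf.mul2 hg)
    have Ec : (fun x => (starRingEnd ℂ) (T (fun y => (starRingEnd ℂ) (g y * eG d y)) x)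
          * T (eG d) x)
        =ᵐ[(volume : Measure (Dom d))]
        (fun x => (starRingEnd ℂ) (T (eG d) x) * T (fun y => g y * eG d y) x) :=
      hII (fun y => g y * eG d y) (hg.mul2 heA)
    have Ed : (fun x => (starRingEnd ℂ) (T (fun y => (starRingEnd ℂ) (g y * eG d y)) x)
          * T (eG d) x)
        =ᵐ[(volume : Measure (Dom d))]
        (fun x => (starRingEnd ℂ) (T (fun y => (starRingEnd ℂ) (g y)) x)
          * T (fun y => eG d y * eG d y) x) := hIIIa g (eG d) hg heA
    have Ee := hII f hf
    have Ef := hII g hg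
    filter_upwards [Ea, Eb, Ec, Ed, Ee, Ef, hu_nz] with x a b c dd ee ff hux
    set U : ℂ := T (eG d) x with hU
    set W : ℂ := T (fun y => eG d y * eG d y) x with hW
    set A : ℂ := T (fun y => f y * g y) x with hA
    set Bb : ℂ := T f x with hBb
    set C : ℂ := T g x with hC
    set E : ℂ := T (fun y => g y * eG d y) x with hE
    set TCF : ℂ := T (fun y => (starRingEnd ℂ) (f y)) x with hTCF
    set TCG : ℂ := T (fun y => (starRingEnd ℂ) (g y)) x with hTCG
    have hcu : (starRingEnd ℂ) U ≠ 0 := by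
      intro hcc; exact hux (by simpa using congrArg (starRingEnd ℂ) hcc)
    have q1 : (starRingEnd ℂ) U * A = (starRingEnd ℂ) TCF * E := b.symm.trans a
    have q2 : (starRingEnd ℂ) U * E = (starRingEnd ℂ) TCG * W := c.symm.trans dd
    have key : ((starRingEnd ℂ) U * (starRingEnd ℂ) U) * (U ^ 2 * A)
        = ((starRingEnd ℂ) U * (starRingEnd ℂ) U) * (Bb * C * W) := by
      calc ((starRingEnd ℂ) U * (starRingEnd ℂ) U) * (U ^ 2 * A)
          = ((starRingEnd ℂ) U * U * U) * ((starRingEnd ℂ) U * A) := by ring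
        _ = ((starRingEnd ℂ) U * U * U) * ((starRingEnd ℂ) TCF * E) := by rw [q1]
        _ = (((starRingEnd ℂ) TCF * U) * ((starRingEnd ℂ) U * E)) * U := by ring
        _ = (((starRingEnd ℂ) U * Bb) * ((starRingEnd ℂ) TCG * W)) * U := by rw [ee, q2]
        _ = (((starRingEnd ℂ) U * Bb) * W) * ((starRingEnd ℂ) TCG * U) := by ring
        _ = (((starRingEnd ℂ) U * Bb) * W) * ((starRingEnd ℂ) U * C) := by rw [ff]
        _ = ((starRingEnd ℂ) U * (starRingEnd ℂ) U) * (Bb * C * W) := by ring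
    exact mul_left_cancel₀ (mul_ne_zero hcu hcu) key
  -- measurable representatives and the phase
  have hsmu := huA.1.1
  have hsmw := hwA.1.1
  set u' : Dom d → ℂ := hsmu.mk (T (eG d)) with hu'def
  set w' : Dom d → ℂ := hsmw.mk (T (fun y => eG d y * eG d y)) with hw'def
  have hu'm : Measurable u' := hsmu.stronglyMeasurable_mk.measurable
  have hw'm : Measurable w' := hsmw.stronglyMeasurable_mk.measurable
  have hu'e : T (eG d) =ᵐ[(volume : Measure (Dom d))] u' := hsmu.ae_eq_mk
  have hw'e : T (fun y => eG d y * eG d y) =ᵐ[(volume : Measure (Dom d))] w' := hsmw.ae_eq_mk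
  set α : Dom d → ℝ := fun x => (u' x ^ 2 * (starRingEnd ℂ) (w' x)).arg with hαdef
  have hαm : Measurable α := by
    rw [hαdef]
    exact Complex.measurable_arg.comp
      ((hu'm.pow_const 2).mul (Complex.continuous_conj.measurable.comp hw'm))
  -- the key phase identities
  have hMe : ∀ᵐ x ∂(volume : Measure (Dom d)),
      (T (eG d) x) ^ 2 * T (fun y => (eG d y * eG d y) * eG d y) x
        = T (fun y => eG d y * eG d y) x * T (eG d) x
          * T (fun y => eG d y * eG d y) x :=
    hM0 (fun y => eG d y * eG d y) (eG d) he2A heA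
  have hphase : ∀ᵐ x ∂(volume : Measure (Dom d)),
      Complex.exp (-(Complex.I * ((α x : ℝ) : ℂ))) * (T (eG d) x) ^ 2
          = T (fun y => eG d y * eG d y) x
      ∧ Complex.exp (-(Complex.I * ((α x : ℝ) : ℂ))) * T (eG d) x
          = (starRingEnd ℂ) (Complex.exp (-(Complex.I * ((α x : ℝ) : ℂ))))
            * (starRingEnd ℂ) (T (eG d) x) := by
    filter_upwards [hu_nz, hw_nz, hMOD, hP2, hMe, hu'e, hw'e] with x h1 h2 h3 h4 h5 h6 h7
    set U : ℂ := T (eG d) x with hU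
    set W : ℂ := T (fun y => eG d y * eG d y) x with hW
    set T3 : ℂ := T (fun y => (eG d y * eG d y) * eG d y) x with hT3
    have hax : α x = (U ^ 2 * (starRingEnd ℂ) W).arg := by
      rw [hαdef]
      simp only []
      rw [← h6, ← h7]
    have hE1 : (starRingEnd ℂ) W * W = (starRingEnd ℂ) U ^ 2 * U ^ 2 := h3
    have hE2 : (starRingEnd ℂ) W * W * U = (starRingEnd ℂ) U * W ^ 2 := by
      have step : U * ((starRingEnd ℂ) W * W * U) = U * ((starRingEnd ℂ) U * W ^ 2) := by
        calc U * ((starRingEnd ℂ) W * W * U)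
            = ((starRingEnd ℂ) W * W) * (U * U) := by ring
          _ = ((starRingEnd ℂ) U * T3) * (U * U) := by rw [h4]
          _ = (starRingEnd ℂ) U * (U ^ 2 * T3) := by ring
          _ = (starRingEnd ℂ) U * (W * U * W) := by rw [h5]
          _ = U * ((starRingEnd ℂ) U * W ^ 2) := by ring
      exact mul_left_cancel₀ h1 step
    have := phase_key U W h1 h2 hE1 hE2
    rw [hax]
    exact this
  -- the multiplier
  set m : Dom d → ℂ := fun x => Complex.exp (-(Complex.I * ((α x : ℝ) : ℂ))) with hmdef
  have hm_meas : Measurable m := by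
    rw [hmdef]
    exact Complex.continuous_exp.measurable.comp
      ((measurable_const.mul (Complex.measurable_ofReal.comp hαm)).neg)
  have hm_abs : ∀ x, ‖m x‖ = 1 := fun x => unit_abs_exp (α x)
  have hm_unit : ∀ x, (starRingEnd ℂ) (m x) * m x = 1 := fun x => conj_mul_exp_unit (α x)
  have hm_ne : ∀ x, m x ≠ 0 := fun x => Complex.exp_ne_zero _
  set T₁ : (Dom d → ℂ) → (Dom d → ℂ) := fun f => fun x => m x * T f x with hT₁def
  have hT₁mem : ∀ f, MemA d f → MemA d (T₁ f) := by
    intro f hf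
    exact memA_unit_mul hm_meas hm_abs (hTmem f hf)
  refine ⟨α, T₁, hαm, ⟨⟨hT₁mem, ?_, ?_, ?_, ?_, ?_, ?_⟩, ?_, ?_⟩, ?_⟩
  · -- ae_eq
    intro f g hf hg hfg
    filter_upwards [hTae f g hf hg hfg] with x hx
    simp only [hT₁def, hx]
  · -- add
    intro f g hf hg
    filter_upwards [hTadd f g hf hg] with x hx
    simp only [hT₁def, Pi.add_apply] at hx ⊢
    rw [hx]; ring
  · -- smul
    intro a f hf
    filter_upwards [hTsmul a f hf] with x hx
    simp only [hT₁def, Pi.smul_apply, smul_eq_mul] at hx ⊢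
    rw [hx]; ring
  · -- inner
    intro f g hf hg
    have : ∫ x : Dom d, (starRingEnd ℂ) (T₁ f x) * T₁ g x
        = ∫ x : Dom d, (starRingEnd ℂ) (T f x) * T g x := by
      apply integral_congr_ae
      filter_upwards with x
      simp only [hT₁def, map_mul]
      calc (starRingEnd ℂ) (m x) * (starRingEnd ℂ) (T f x) * (m x * T g x)
          = ((starRingEnd ℂ) (m x) * m x) * ((starRingEnd ℂ) (T f x) * T g x) := by ring
        _ = (starRingEnd ℂ) (T f x) * T g x := by rw [hm_unit x, one_mul]
    rw [this]
    exact F1 f g hf hg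
  · -- mul
    intro f g hf hg
    have hconv : T (f * g) =ᵐ[(volume : Measure (Dom d))] T (fun y => f y * g y) :=
      hTae (f * g) (fun y => f y * g y) (hf.mul2 hg) (hf.mul2 hg)
        (Filter.Eventually.of_forall fun y => rfl)
    filter_upwards [hM0 f g hf hg, hphase, hu_nz, hconv] with x h5 hph hux hcv
    simp only [hT₁def, Pi.mul_apply]
    rw [hcv]
    have hAx : T (fun y => f y * g y) x = m x * T f x * T g x := by
      have h6 : (T (eG d) x) ^ 2 * T (fun y => f y * g y) x
          = (T (eG d) x) ^ 2 * (m x * T f x * T g x) := by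
        rw [h5, ← hph.1]
        ring
      exact mul_left_cancel₀ (pow_ne_zero 2 hux) h6
    rw [hAx]
    ring
  · -- star
    intro f hf
    filter_upwards [hII f hf, hphase, hu_nz] with x ee hph hux
    simp only [hT₁def]
    have hcU : (starRingEnd ℂ) (T (eG d) x) ≠ 0 := by
      intro hcc; exact hux (by simpa using congrArg (starRingEnd ℂ) hcc)
    have ee' := congrArg (starRingEnd ℂ) ee
    simp only [map_mul, Complex.conj_conj] at ee'
    have key : (m x * T (fun y => (starRingEnd ℂ) (f y)) x) * (starRingEnd ℂ) (T (eG d) x)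
        = ((starRingEnd ℂ) (m x) * (starRingEnd ℂ) (T f x))
            * (starRingEnd ℂ) (T (eG d) x) := by
      calc (m x * T (fun y => (starRingEnd ℂ) (f y)) x) * (starRingEnd ℂ) (T (eG d) x)
          = m x * (T (fun y => (starRingEnd ℂ) (f y)) x * (starRingEnd ℂ) (T (eG d) x)) := by
            ring
        _ = m x * (T (eG d) x * (starRingEnd ℂ) (T f x)) := by rw [ee']
        _ = (m x * T (eG d) x) * (starRingEnd ℂ) (T f x) := by ring
        _ = ((starRingEnd ℂ) (m x) * (starRingEnd ℂ) (T (eG d) x))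
              * (starRingEnd ℂ) (T f x) := by rw [hph.2]
        _ = ((starRingEnd ℂ) (m x) * (starRingEnd ℂ) (T f x))
              * (starRingEnd ℂ) (T (eG d) x) := by ring
    have := mul_right_cancel₀ hcU key
    rw [map_mul]
    exact this
  · -- surjective
    intro g hg
    have hg' : MemA d (fun x => Complex.exp (Complex.I * ((α x : ℝ) : ℂ)) * g x) := by
      refine memA_unit_mul ?_ ?_ hg
      · exact Complex.continuous_exp.measurable.comp
          (measurable_const.mul (Complex.measurable_ofReal.comp hαm))
      · intro x
        rw [Complex.norm_exp]
        simp
    obtain ⟨f, hfA, hTf⟩ := hsurj _ hg'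
    refine ⟨f, hfA, ?_⟩
    filter_upwards [hTf] with x hx
    simp only [hT₁def]
    rw [hx]
    simp only [hmdef]
    rw [← mul_assoc, mul_comm (Complex.exp (-(Complex.I * ((α x : ℝ) : ℂ))))
      (Complex.exp (Complex.I * ((α x : ℝ) : ℂ))), exp_mul_exp_unit (α x), one_mul]
  · -- injective
    intro f g hf hg hT₁eq
    have hTeq : T f =ᵐ[(volume : Measure (Dom d))] T g := by
      filter_upwards [hT₁eq] with x hx
      simp only [hT₁def] at hx
      exact mul_left_cancel₀ (hm_ne x) hx
    have hD : MemA d (f + (-1 : ℂ) • g) := memA_add hf (memA_smul _ hg)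
    have hTD : T (f + (-1 : ℂ) • g) =ᵐ[(volume : Measure (Dom d))] (0 : Dom d → ℂ) := by
      have h1 := hTadd f ((-1 : ℂ) • g) hf (memA_smul _ hg)
      have h2 := hTsmul (-1 : ℂ) g hg
      filter_upwards [h1, h2, hTeq] with x hx1 hx2 hx3
      simp only [Pi.add_apply, Pi.smul_apply, smul_eq_mul, Pi.zero_apply] at hx1 hx2 ⊢
      rw [hx1, hx2, hx3]
      ring
    have hI := F1 _ _ hD hD
    have hL0 : ∫ x : Dom d, (starRingEnd ℂ) (T (f + (-1 : ℂ) • g) x)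
        * T (f + (-1 : ℂ) • g) x = 0 := by
      rw [integral_congr_ae (g := fun _ => (0 : ℂ)) (by
        filter_upwards [hTD] with x hx
        simp only [Pi.zero_apply] at hx
        rw [hx]; ring)]
      exact integral_zero _ _
    have hcd : ∫ x : Dom d, (starRingEnd ℂ) ((f + (-1 : ℂ) • g) x) * (f + (-1 : ℂ) • g) x
        = ((∫ x : Dom d, Complex.normSq (f x - g x) : ℝ) : ℂ) := by
      calc ∫ x : Dom d, (starRingEnd ℂ) ((f + (-1 : ℂ) • g) x) * (f + (-1 : ℂ) • g) x
          = ∫ x : Dom d, ((Complex.normSq (f x - g x) : ℝ) : ℂ) := by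
            apply integral_congr_ae
            filter_upwards with x
            simp only [Pi.add_apply, Pi.smul_apply, smul_eq_mul]
            rw [show f x + (-1 : ℂ) * g x = f x - g x by ring, mul_comm, Complex.mul_conj]
        _ = ((∫ x : Dom d, Complex.normSq (f x - g x) : ℝ) : ℂ) := integral_ofReal
    have hR0 : ((∫ x : Dom d, Complex.normSq (f x - g x) : ℝ) : ℂ) = 0 :=
      hcd.symm.trans (hI.symm.trans hL0)
    have hfeq : (f + (-1 : ℂ) • g) = (fun x => f x - g x) := funext fun x => by
      simp only [Pi.add_apply, Pi.smul_apply, smul_eq_mul]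
      ring
    have hint : Integrable (fun x => Complex.normSq (f x - g x))
        (volume : Measure (Dom d)) := by
      have hD2 : MemLp (fun x => f x - g x) 2 (volume : Measure (Dom d)) := hfeq ▸ hD.1
      have hDinf : MemLp (fun x => f x - g x) ⊤ (volume : Measure (Dom d)) := hfeq ▸ hD.2
      have := integrable_mul_L2 (memA_conj (⟨hD2, hDinf⟩ : MemA d _)).1 hD2
      refine this.norm.congr (Filter.Eventually.of_forall fun x => ?_)
      show ‖(starRingEnd ℂ) (f x - g x) * (f x - g x)‖ = Complex.normSq (f x - g x)
      rw [mul_comm, Complex.mul_conj, Complex.norm_real, Real.norm_eq_abs,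
        _root_.abs_of_nonneg (Complex.normSq_nonneg _)]
    have h00 : ∫ x : Dom d, Complex.normSq (f x - g x) = 0 := by exact_mod_cast hR0
    have hae := (integral_eq_zero_iff_of_nonneg
      (fun x => Complex.normSq_nonneg _) hint).mp h00
    filter_upwards [hae] with x hx
    simp only [Pi.zero_apply] at hx
    exact sub_eq_zero.mp (Complex.normSq_eq_zero.mp hx)
  · -- factorization
    intro f hf
    filter_upwards with x
    simp only [hT₁def, hmdef, ← mul_assoc]
    rw [exp_mul_exp_unit (α x), one_mul]

end Forward
section Backward

lemma backward_dir (d : ℕ) (T : (Dom d → ℂ) → (Dom d → ℂ))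
    (α : Dom d → ℝ) (T₁ : (Dom d → ℂ) → (Dom d → ℂ))
    (hαm : Measurable α) (hA : IsStarAuto d T₁)
    (hfac : ∀ f, MemA d f → T f =ᵐ[(volume : Measure (Dom d))]
      fun x => Complex.exp (Complex.I * α x) * T₁ f x) :
    (∀ k : ℕ, 1 ≤ k → ∀ f g, MemA d f → MemA d g →
      pip d (T f) (T g) k = pip d f g k) ∧
    (∀ g, MemA d g → ∃ f, MemA d f ∧ T f =ᵐ[(volume : Measure (Dom d))] g) := by
  obtain ⟨hEndo, hSurj, hInj⟩ := hA
  have hpow : ∀ f, MemA d f → ∀ k : ℕ, 1 ≤ k →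
      T₁ (fun x => f x ^ k) =ᵐ[(volume : Measure (Dom d))] fun x => T₁ f x ^ k := by
    intro f hf k hk
    induction k with
    | zero => omega
    | succ n ih =>
      rcases Nat.eq_zero_or_pos n with h0 | hn
      · subst h0
        have h1 : (fun x => f x ^ 1) = f := funext fun x => pow_one _
        rw [h1]
        filter_upwards with x
        rw [pow_one]
      · have hfn : MemA d (fun x => f x ^ n) := by
          simpa using memA_pow_mul hf hf n 0 (by omega)
        have hmul := hEndo.mul (fun x => f x ^ n) f hfn hf
        have hstep : (fun x => f x ^ (n + 1)) = (fun x => f x ^ n) * f :=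
          funext fun x => by simp [pow_succ]
        rw [hstep]
        refine hmul.trans ?_
        filter_upwards [ih (by omega)] with x hx
        simp only [Pi.mul_apply]
        rw [hx, pow_succ]
  constructor
  · intro k hk f g hf hg
    have hfk : MemA d (fun x => f x ^ k) := by simpa using memA_pow_mul hf hf k 0 (by omega)
    have hgk : MemA d (fun x => g x ^ k) := by simpa using memA_pow_mul hg hg k 0 (by omega)
    have h1 : pip d (T f) (T g) k
        = ∫ x : Dom d, (starRingEnd ℂ) (T₁ f x) ^ k * T₁ g x ^ k := by
      rw [pip_congr_ae d (hfac f hf) (hfac g hg) k, pip]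
      apply integral_congr_ae
      filter_upwards with x
      have hu1 := conj_exp_unit (α x)
      calc (starRingEnd ℂ) (Complex.exp (Complex.I * ((α x : ℝ) : ℂ)) * T₁ f x) ^ k
            * (Complex.exp (Complex.I * ((α x : ℝ) : ℂ)) * T₁ g x) ^ k
          = ((starRingEnd ℂ) (Complex.exp (Complex.I * ((α x : ℝ) : ℂ)))
              * Complex.exp (Complex.I * ((α x : ℝ) : ℂ))) ^ k
            * ((starRingEnd ℂ) (T₁ f x) ^ k * T₁ g x ^ k) := by
            rw [map_mul]; ring
        _ = (starRingEnd ℂ) (T₁ f x) ^ k * T₁ g x ^ k := by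
            rw [hu1, one_pow, one_mul]
    have h2 : ∫ x : Dom d, (starRingEnd ℂ) (T₁ f x) ^ k * T₁ g x ^ k
        = ∫ x : Dom d, (starRingEnd ℂ) (T₁ (fun y => f y ^ k) x)
            * T₁ (fun y => g y ^ k) x := by
      apply integral_congr_ae
      filter_upwards [hpow f hf k hk, hpow g hg k hk] with x hx1 hx2
      rw [hx1, hx2, map_pow]
    have h3 := hEndo.inner (fun y => f y ^ k) (fun y => g y ^ k) hfk hgk
    rw [h1, h2, h3, pip]
    apply integral_congr_ae
    filter_upwards with x
    show (starRingEnd ℂ) (f x ^ k) * g x ^ k = (starRingEnd ℂ) (f x) ^ k * g x ^ k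
    rw [map_pow]
  · intro g hg
    have hg2 : MemA d (fun x => Complex.exp (-(Complex.I * ((α x : ℝ) : ℂ))) * g x) := by
      refine memA_unit_mul ?_ (fun x => unit_abs_exp (α x)) hg
      exact Complex.continuous_exp.measurable.comp
        ((measurable_const.mul (Complex.measurable_ofReal.comp hαm)).neg)
    obtain ⟨f, hfA, hT₁f⟩ := hSurj _ hg2
    refine ⟨f, hfA, ?_⟩
    refine (hfac f hfA).trans ?_
    filter_upwards [hT₁f] with x hx
    rw [hx, ← mul_assoc, exp_mul_exp_unit (α x), one_mul]

end Backward
/-- Theorem 14 of the paper, unitary case: a linear map `T : 𝒜 → 𝒜`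
preserves power inner products and is surjective onto `𝒜` (i.e. `Γ₂(T)` is unitary)
if and only if `T = e^{iα} T₁` for a measurable `α : ℝ^d → ℝ` and a `*`-automorphism
`T₁` of `𝒜`. -/
theorem statement15 (d : ℕ) (hd : 1 ≤ d)
    (T : (Dom d → ℂ) → (Dom d → ℂ))
    (hTmem : ∀ f, MemA d f → MemA d (T f))
    (hTae : ∀ f g, MemA d f → MemA d g → f =ᵐ[(volume : Measure (Dom d))] g →
      T f =ᵐ[(volume : Measure (Dom d))] T g)
    (hTadd : ∀ f g, MemA d f → MemA d g →
      T (f + g) =ᵐ[(volume : Measure (Dom d))] T f + T g)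
    (hTsmul : ∀ (a : ℂ) (f : Dom d → ℂ), MemA d f →
      T (a • f) =ᵐ[(volume : Measure (Dom d))] a • T f) :
    ((∀ k : ℕ, 1 ≤ k → ∀ f g, MemA d f → MemA d g →
      pip d (T f) (T g) k = pip d f g k) ∧
     (∀ g, MemA d g → ∃ f, MemA d f ∧ T f =ᵐ[(volume : Measure (Dom d))] g)) ↔
    (∃ (α : Dom d → ℝ) (T₁ : (Dom d → ℂ) → (Dom d → ℂ)),
      Measurable α ∧ IsStarAuto d T₁ ∧
      ∀ f, MemA d f → T f =ᵐ[(volume : Measure (Dom d))]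
        fun x => Complex.exp (Complex.I * α x) * T₁ f x) := by

  constructor
  · rintro ⟨hpip, hsurj⟩
    exact forward_dir d T hTmem hTae hTadd hTsmul hpip hsurj
  · rintro ⟨α, T₁, hαm, hAuto, hfac⟩
    exact backward_dir d T α T₁ hαm hAuto hfac
end
end

section
/- Let T: 𝒜 → 𝒜 be a linear map with ∥Tf∥₂ ≤ ∥f∥₂ and ∥Tf∥_∞ ≤ ∥f∥_∞ for all f ∈ 𝒜. Then for every f ∈ 𝒜 and every integer n ≥ 0, S_n(Tf, Tf) ≤ S_n(f, f); consequently, for every f ∈ 𝒜 with ∥f∥_∞ < 1/2, K(Tf, Tf) ≤ K(f, f), i.e. −∫_{ℝ^d} log(1 − 4|Tf(s)|²) ds ≤ −∫_{ℝ^d} log(1 − 4|f(s)|²) ds. (This is Lemma 15 of the paper: ∥Γ₂(T)Ψ(f)∥ ≤ ∥Ψ(f)∥ on every single quadratic exponential vector.) -/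
open MeasureTheory Complex Finset
open scoped Nat ENNReal

noncomputable section

namespace St18

/-- truncation of a complex number at norm level `t` -/
def trunc (t : ℝ) (z : ℂ) : ℂ := (t / max t ‖z‖) • z

lemma trunc_continuous {t : ℝ} (ht : 0 < t) : Continuous (trunc t) := by
  show Continuous ((fun z : ℂ => t / max t ‖z‖) • (id : ℂ → ℂ))
  apply Continuous.smul _ continuous_id
  exact continuous_const.div (continuous_const.max continuous_norm)
    (fun z => ne_of_gt (lt_of_lt_of_le ht (le_max_left _ _)))

lemma norm_trunc_le_norm {t : ℝ} (ht : 0 < t) (z : ℂ) : ‖trunc t z‖ ≤ ‖z‖ := by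
  rw [trunc, norm_smul, Real.norm_eq_abs, _root_.abs_of_nonneg (by positivity)]
  have h1 : t / max t ‖z‖ ≤ 1 := by
    rw [div_le_one (lt_of_lt_of_le ht (le_max_left _ _))]; exact le_max_left _ _
  nlinarith [norm_nonneg z]

lemma norm_trunc_le {t : ℝ} (ht : 0 < t) (z : ℂ) : ‖trunc t z‖ ≤ t := by
  rw [trunc, norm_smul, Real.norm_eq_abs, _root_.abs_of_nonneg (by positivity)]
  rcases le_total ‖z‖ t with h | h
  · have h1 : t / max t ‖z‖ ≤ 1 := by
      rw [div_le_one (lt_of_lt_of_le ht (le_max_left _ _))]; exact le_max_left _ _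
    calc t / max t ‖z‖ * ‖z‖ ≤ 1 * t :=
        mul_le_mul h1 h (norm_nonneg z) zero_le_one
      _ = t := one_mul t
  · have hz : max t ‖z‖ = ‖z‖ := max_eq_right h
    have hzpos : 0 < ‖z‖ := lt_of_lt_of_le ht h
    rw [hz] at *
    exact le_of_eq (by field_simp)

lemma norm_sub_trunc {t : ℝ} (ht : 0 < t) (z : ℂ) :
    ‖z - trunc t z‖ = max (‖z‖ - t) 0 := by
  rcases le_total ‖z‖ t with h | h
  · have hz : max t ‖z‖ = t := max_eq_left h
    rw [trunc, hz, div_self ht.ne', one_smul, sub_self, norm_zero]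
    rw [max_eq_right (by linarith)]
  · have hz : max t ‖z‖ = ‖z‖ := max_eq_right h
    have hzpos : 0 < ‖z‖ := lt_of_lt_of_le ht h
    have : z - trunc t z = (1 - t / ‖z‖) • z := by
      rw [trunc, hz]; module
    rw [this, norm_smul, Real.norm_eq_abs, _root_.abs_of_nonneg (by
      rw [sub_nonneg, div_le_one hzpos]; exact h)]
    rw [max_eq_left (by linarith)]
    have hne : ‖z‖ ≠ 0 := hzpos.ne'
    field_simp


lemma lintegral_sq_eq {d : ℕ} (h : Dom d → ℂ) :
    ∫⁻ x, ENNReal.ofReal (‖h x‖ ^ 2) ∂(volume : Measure (Dom d)) =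
      eLpNorm h 2 (volume : Measure (Dom d)) ^ 2 := by
  rw [eLpNorm_eq_lintegral_rpow_enorm_toReal two_ne_zero ENNReal.ofNat_ne_top,
    ← ENNReal.rpow_natCast _ 2, ← ENNReal.rpow_mul]
  norm_num

lemma lemA {d : ℕ} (T : (Dom d → ℂ) → (Dom d → ℂ))
    (hTadd : ∀ f g, MemA d f → MemA d g →
      T (f + g) =ᵐ[(volume : Measure (Dom d))] T f + T g)
    (hT2 : ∀ f, MemA d f →
      eLpNorm (T f) 2 (volume : Measure (Dom d)) ≤ eLpNorm f 2 (volume : Measure (Dom d)))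
    (hTinf : ∀ f, MemA d f →
      eLpNorm (T f) ⊤ (volume : Measure (Dom d)) ≤ eLpNorm f ⊤ (volume : Measure (Dom d)))
    (f : Dom d → ℂ) (hf : MemA d f) (ht : 0 < t) :
    ∫⁻ x, ENNReal.ofReal ((max (‖T f x‖ - t) 0) ^ 2) ∂(volume : Measure (Dom d)) ≤
      ∫⁻ x, ENNReal.ofReal ((max (‖f x‖ - t) 0) ^ 2) ∂(volume : Measure (Dom d)) := by
  set f2 : Dom d → ℂ := fun x => trunc t (f x) with hf2def
  set f1 : Dom d → ℂ := f - f2 with hf1def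
  have hf2m : MemA d f2 := by
    have hsm : AEStronglyMeasurable f2 volume :=
      (trunc_continuous ht).comp_aestronglyMeasurable hf.1.aestronglyMeasurable
    exact ⟨hf.1.of_le hsm (ae_of_all _ fun x => norm_trunc_le_norm ht _),
      hf.2.of_le hsm (ae_of_all _ fun x => norm_trunc_le_norm ht _)⟩
  have hf1m : MemA d f1 := ⟨hf.1.sub hf2m.1, hf.2.sub hf2m.2⟩
  have hsum : f1 + f2 = f := sub_add_cancel f f2
  have hTf : T f =ᵐ[(volume : Measure (Dom d))] T f1 + T f2 := by
    rw [← hsum]; exact hTadd f1 f2 hf1m hf2m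
  have hTf2 : ∀ᵐ x ∂(volume : Measure (Dom d)), ‖T f2 x‖ ≤ t := by
    have h1 : eLpNorm (T f2) ⊤ (volume : Measure (Dom d)) ≤ ENNReal.ofReal t := by
      refine (hTinf f2 hf2m).trans ?_
      rw [eLpNorm_exponent_top]
      exact eLpNormEssSup_le_of_ae_bound (ae_of_all _ fun x => norm_trunc_le ht _)
    rw [eLpNorm_exponent_top] at h1
    filter_upwards [enorm_ae_le_eLpNormEssSup (T f2) volume] with x hx
    have h2 := hx.trans h1
    rw [← ofReal_norm_eq_enorm] at h2
    exact (ENNReal.ofReal_le_ofReal_iff ht.le).1 h2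
  have key : ∀ᵐ x ∂(volume : Measure (Dom d)),
      ENNReal.ofReal ((max (‖T f x‖ - t) 0) ^ 2) ≤ ENNReal.ofReal (‖T f1 x‖ ^ 2) := by
    filter_upwards [hTf, hTf2] with x hx hx2
    apply ENNReal.ofReal_le_ofReal
    have h3 : ‖T f x‖ ≤ ‖T f1 x‖ + t := by
      rw [hx, Pi.add_apply] at *
      exact (norm_add_le _ _).trans (by linarith)
    have h4 : max (‖T f x‖ - t) 0 ≤ ‖T f1 x‖ := max_le (by linarith) (norm_nonneg _)
    exact pow_le_pow_left₀ (le_max_right _ _) h4 2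
  calc ∫⁻ x, ENNReal.ofReal ((max (‖T f x‖ - t) 0) ^ 2) ∂(volume : Measure (Dom d))
      ≤ ∫⁻ x, ENNReal.ofReal (‖T f1 x‖ ^ 2) ∂(volume : Measure (Dom d)) :=
        lintegral_mono_ae key
    _ = eLpNorm (T f1) 2 (volume : Measure (Dom d)) ^ 2 := lintegral_sq_eq _
    _ ≤ eLpNorm f1 2 (volume : Measure (Dom d)) ^ 2 := by
        gcongr
        exact hT2 f1 hf1m
    _ = ∫⁻ x, ENNReal.ofReal (‖f1 x‖ ^ 2) ∂(volume : Measure (Dom d)) :=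
        (lintegral_sq_eq _).symm
    _ = ∫⁻ x, ENNReal.ofReal ((max (‖f x‖ - t) 0) ^ 2) ∂(volume : Measure (Dom d)) := by
        apply lintegral_congr
        intro x
        rw [hf1def]
        simp only [Pi.sub_apply]
        rw [norm_sub_trunc ht]

lemma layer_one (a : ℝ) (ha : 0 ≤ a) (m : ℕ) :
    ∫⁻ t in Set.Ioi (0:ℝ), ENNReal.ofReal (t ^ m * (max (a - t) 0) ^ 2) =
      ENNReal.ofReal (a ^ (m + 3) * (2 / (((m:ℝ) + 1) * ((m:ℝ) + 2) * ((m:ℝ) + 3)))) := by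
  have hcont : Continuous (fun t : ℝ => t ^ m * (max (a - t) 0) ^ 2) := by
    apply Continuous.mul (by fun_prop)
    exact ((continuous_const.sub continuous_id).max continuous_const).pow 2
  have hzero : ∀ t ∈ Set.Ioi a, t ^ m * (max (a - t) 0) ^ 2 = 0 := by
    intro t htm
    have : max (a - t) 0 = 0 := max_eq_right (by simp at htm; linarith)
    rw [this]; ring
  have hunion : Set.Ioc (0:ℝ) a ∪ Set.Ioi a = Set.Ioi 0 := Set.Ioc_union_Ioi_eq_Ioi ha
  have hint1 : IntegrableOn (fun t : ℝ => t ^ m * (max (a - t) 0) ^ 2) (Set.Ioc 0 a) :=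
    hcont.integrableOn_Ioc
  have hint2 : IntegrableOn (fun t : ℝ => t ^ m * (max (a - t) 0) ^ 2) (Set.Ioi a) := by
    exact (integrableOn_zero (ε' := ℝ)).congr_fun (fun t htm => (hzero t htm).symm)
      measurableSet_Ioi
  have hInt : IntegrableOn (fun t : ℝ => t ^ m * (max (a - t) 0) ^ 2) (Set.Ioi 0) := by
    rw [← hunion]; exact hint1.union hint2
  rw [← ofReal_integral_eq_lintegral_ofReal hInt]
  swap
  · refine (ae_restrict_iff' measurableSet_Ioi).2 (ae_of_all _ fun t ht => ?_)
    exact mul_nonneg (pow_nonneg ht.le m) (pow_nonneg (le_max_right _ _) 2)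
  congr 1
  rw [← hunion, setIntegral_union (Set.Ioc_disjoint_Ioi le_rfl) measurableSet_Ioi hint1 hint2]
  rw [setIntegral_congr_fun measurableSet_Ioi hzero, integral_zero, add_zero]
  rw [← intervalIntegral.integral_of_le ha]
  have hcongr : ∀ t ∈ Set.uIcc (0:ℝ) a, t ^ m * (max (a - t) 0) ^ 2
      = a ^ 2 * t ^ m - 2 * a * t ^ (m + 1) + t ^ (m + 2) := by
    intro t htm
    rw [Set.uIcc_of_le ha] at htm
    rw [max_eq_left (by linarith [htm.2])]
    ring
  rw [intervalIntegral.integral_congr hcongr]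
  have i1 : IntervalIntegrable (fun t : ℝ => a ^ 2 * t ^ m) volume 0 a := by
    apply Continuous.intervalIntegrable; fun_prop
  have i2 : IntervalIntegrable (fun t : ℝ => 2 * a * t ^ (m + 1)) volume 0 a := by
    apply Continuous.intervalIntegrable; fun_prop
  have i3 : IntervalIntegrable (fun t : ℝ => t ^ (m + 2)) volume 0 a := by
    apply Continuous.intervalIntegrable; fun_prop
  rw [intervalIntegral.integral_add (i1.sub i2) i3, intervalIntegral.integral_sub i1 i2,
    intervalIntegral.integral_const_mul, intervalIntegral.integral_const_mul,
    integral_pow, integral_pow, integral_pow]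
  have h1 : ((m:ℝ) + 1) ≠ 0 := by positivity
  have h2 : ((m:ℝ) + 2) ≠ 0 := by positivity
  have h3 : ((m:ℝ) + 3) ≠ 0 := by positivity
  push_cast
  field_simp
  ring

lemma layer {d : ℕ} (u : Dom d → ℝ) (hu : Measurable u) (hu0 : ∀ x, 0 ≤ u x) (m : ℕ) :
    ∫⁻ x, ENNReal.ofReal (u x ^ (m + 3)) ∂(volume : Measure (Dom d)) =
      ENNReal.ofReal ((((m:ℝ) + 1) * ((m:ℝ) + 2) * ((m:ℝ) + 3)) / 2) *
        ∫⁻ t in Set.Ioi (0:ℝ), ENNReal.ofReal (t ^ m) *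
          ∫⁻ x, ENNReal.ofReal ((max (u x - t) 0) ^ 2) ∂(volume : Measure (Dom d)) := by
  have hmeas : ∀ t : ℝ, Measurable (fun x => ENNReal.ofReal ((max (u x - t) 0) ^ 2)) :=
    fun t => (((hu.sub measurable_const).max measurable_const).pow_const 2).ennreal_ofReal
  have step1 : ∀ t : ℝ, ENNReal.ofReal (t ^ m) *
      ∫⁻ x, ENNReal.ofReal ((max (u x - t) 0) ^ 2) ∂(volume : Measure (Dom d)) =
      ∫⁻ x, ENNReal.ofReal (t ^ m) * ENNReal.ofReal ((max (u x - t) 0) ^ 2)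
        ∂(volume : Measure (Dom d)) := by
    intro t
    rw [lintegral_const_mul _ (hmeas t)]
  simp_rw [step1]
  have hF : Measurable (Function.uncurry fun (t : ℝ) (x : Dom d) =>
      ENNReal.ofReal (t ^ m) * ENNReal.ofReal ((max (u x - t) 0) ^ 2)) := by
    refine Measurable.mul (f := fun p : ℝ × Dom d => ENNReal.ofReal (p.1 ^ m))
      (g := fun p : ℝ × Dom d => ENNReal.ofReal ((max (u p.2 - p.1) 0) ^ 2)) ?_ ?_
    · exact ((measurable_fst.pow_const m)).ennreal_ofReal
    · exact (((hu.comp measurable_snd).sub measurable_fst).max measurable_const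
        |>.pow_const 2).ennreal_ofReal
  rw [lintegral_lintegral_swap hF.aemeasurable]
  have step2 : ∀ x : Dom d,
      ∫⁻ t in Set.Ioi (0:ℝ), ENNReal.ofReal (t ^ m) *
        ENNReal.ofReal ((max (u x - t) 0) ^ 2) =
      ENNReal.ofReal (u x ^ (m + 3) * (2 / (((m:ℝ) + 1) * ((m:ℝ) + 2) * ((m:ℝ) + 3)))) := by
    intro x
    rw [← layer_one (u x) (hu0 x) m]
    apply setLIntegral_congr_fun measurableSet_Ioi
    exact fun t ht => (ENNReal.ofReal_mul (pow_nonneg (le_of_lt ht) m)).symm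
  simp_rw [step2]
  simp_rw [ENNReal.ofReal_mul (pow_nonneg (hu0 _) _)]
  rw [lintegral_mul_const' _ _ ENNReal.ofReal_ne_top, ← mul_assoc, mul_comm]
  rw [← mul_assoc, ← ENNReal.ofReal_mul (by positivity)]
  have h1 : 2 / (((m:ℝ) + 1) * ((m:ℝ) + 2) * ((m:ℝ) + 3)) *
      ((((m:ℝ) + 1) * ((m:ℝ) + 2) * ((m:ℝ) + 3)) / 2) = 1 := by
    have : (0:ℝ) < ((m:ℝ) + 1) * ((m:ℝ) + 2) * ((m:ℝ) + 3) := by positivity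
    field_simp
  rw [h1, ENNReal.ofReal_one, one_mul]

lemma lemB {d : ℕ} (g h : Dom d → ℂ)
    (hg : AEStronglyMeasurable g (volume : Measure (Dom d)))
    (hh : AEStronglyMeasurable h (volume : Measure (Dom d)))
    (h2 : ∫⁻ x, ENNReal.ofReal (‖g x‖ ^ 2) ∂(volume : Measure (Dom d)) ≤
      ∫⁻ x, ENNReal.ofReal (‖h x‖ ^ 2) ∂(volume : Measure (Dom d)))
    (hA : ∀ t : ℝ, 0 < t →
      ∫⁻ x, ENNReal.ofReal ((max (‖g x‖ - t) 0) ^ 2) ∂(volume : Measure (Dom d)) ≤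
        ∫⁻ x, ENNReal.ofReal ((max (‖h x‖ - t) 0) ^ 2) ∂(volume : Measure (Dom d)))
    (k : ℕ) (hk : 1 ≤ k) :
    ∫⁻ x, ENNReal.ofReal (‖g x‖ ^ (2 * k)) ∂(volume : Measure (Dom d)) ≤
      ∫⁻ x, ENNReal.ofReal (‖h x‖ ^ (2 * k)) ∂(volume : Measure (Dom d)) := by
  rcases eq_or_lt_of_le hk with hk1 | hk2
  · simpa [← hk1] using h2
  · set g' := hg.mk g with hg'def
    set h' := hh.mk h with hh'def
    have hgm : Measurable fun x => ‖g' x‖ := hg.measurable_mk.norm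
    have hhm : Measurable fun x => ‖h' x‖ := hh.measurable_mk.norm
    have hge : ∀ (ph : ℝ → ℝ), ∫⁻ x, ENNReal.ofReal (ph ‖g x‖) ∂(volume : Measure (Dom d)) =
        ∫⁻ x, ENNReal.ofReal (ph ‖g' x‖) ∂(volume : Measure (Dom d)) :=
      fun ph => lintegral_congr_ae (hg.ae_eq_mk.mono fun x hx => by dsimp only; rw [hx])
    have hhe : ∀ (ph : ℝ → ℝ), ∫⁻ x, ENNReal.ofReal (ph ‖h x‖) ∂(volume : Measure (Dom d)) =
        ∫⁻ x, ENNReal.ofReal (ph ‖h' x‖) ∂(volume : Measure (Dom d)) :=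
      fun ph => lintegral_congr_ae (hh.ae_eq_mk.mono fun x hx => by dsimp only; rw [hx])
    have hm : 2 * k = (2 * k - 3) + 3 := by omega
    calc ∫⁻ x, ENNReal.ofReal (‖g x‖ ^ (2 * k)) ∂(volume : Measure (Dom d))
        = ∫⁻ x, ENNReal.ofReal (‖g' x‖ ^ ((2 * k - 3) + 3)) ∂(volume : Measure (Dom d)) := by
          rw [← hm]; exact hge (fun r => r ^ (2 * k))
      _ = ENNReal.ofReal (((((2 * k - 3 : ℕ):ℝ) + 1) * (((2 * k - 3 : ℕ):ℝ) + 2) *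
            (((2 * k - 3 : ℕ):ℝ) + 3)) / 2) *
          ∫⁻ t in Set.Ioi (0:ℝ), ENNReal.ofReal (t ^ (2 * k - 3)) *
            ∫⁻ x, ENNReal.ofReal ((max (‖g' x‖ - t) 0) ^ 2) ∂(volume : Measure (Dom d)) :=
          layer _ hgm (fun x => norm_nonneg _) _
      _ ≤ ENNReal.ofReal (((((2 * k - 3 : ℕ):ℝ) + 1) * (((2 * k - 3 : ℕ):ℝ) + 2) *
            (((2 * k - 3 : ℕ):ℝ) + 3)) / 2) *
          ∫⁻ t in Set.Ioi (0:ℝ), ENNReal.ofReal (t ^ (2 * k - 3)) *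
            ∫⁻ x, ENNReal.ofReal ((max (‖h' x‖ - t) 0) ^ 2) ∂(volume : Measure (Dom d)) := by
          apply mul_le_mul_right
          refine lintegral_mono_ae ((ae_restrict_iff' measurableSet_Ioi).2
            (ae_of_all _ fun t ht => ?_))
          apply mul_le_mul_right
          have e1 := hge (fun r => (max (r - t) 0) ^ 2)
          have e2 := hhe (fun r => (max (r - t) 0) ^ 2)
          rw [← e1, ← e2]
          exact hA t ht
      _ = ∫⁻ x, ENNReal.ofReal (‖h' x‖ ^ ((2 * k - 3) + 3)) ∂(volume : Measure (Dom d)) :=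
          (layer _ hhm (fun x => norm_nonneg _) _).symm
      _ = ∫⁻ x, ENNReal.ofReal (‖h x‖ ^ (2 * k)) ∂(volume : Measure (Dom d)) := by
          rw [← hm]; exact (hhe (fun r => r ^ (2 * k))).symm

lemma ae_bound {d : ℕ} (h : Dom d → ℂ) (hm : MemLp h ⊤ (volume : Measure (Dom d))) :
    ∀ᵐ x ∂(volume : Measure (Dom d)), ‖h x‖ ≤ (eLpNorm h ⊤ (volume : Measure (Dom d))).toReal := by
  have hfin : eLpNormEssSup h (volume : Measure (Dom d)) ≠ ⊤ := by
    have := hm.2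
    rw [eLpNorm_exponent_top] at this
    exact this.ne
  filter_upwards [enorm_ae_le_eLpNormEssSup h (volume : Measure (Dom d))] with x hx
  rw [eLpNorm_exponent_top]
  have := ENNReal.toReal_mono hfin hx
  simpa using this

lemma aesm_norm_pow {d : ℕ} (h : Dom d → ℂ)
    (hm : AEStronglyMeasurable h (volume : Measure (Dom d))) (n : ℕ) :
    AEStronglyMeasurable (fun x => ‖h x‖ ^ n) (volume : Measure (Dom d)) :=
  hm.norm.pow n

lemma integrable_sq {d : ℕ} (h : Dom d → ℂ) (hm : MemA d h) :
    Integrable (fun x => ‖h x‖ ^ 2) (volume : Measure (Dom d)) := by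
  have := hm.1.integrable_norm_rpow (by norm_num) (by norm_num)
  simp only [ENNReal.toReal_ofNat] at this
  apply this.congr
  refine ae_of_all _ fun x => ?_
  have h2 : ((2:ℕ):ℝ) = (2:ℝ) := by norm_num
  dsimp only
  rw [← h2, Real.rpow_natCast]

lemma integrable_pow {d : ℕ} (h : Dom d → ℂ) (hm : MemA d h) (k : ℕ) (hk : 1 ≤ k) :
    Integrable (fun x => ‖h x‖ ^ (2 * k)) (volume : Measure (Dom d)) := by
  set M := (eLpNorm h ⊤ (volume : Measure (Dom d))).toReal with hM
  have hb := ae_bound h hm.2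
  have hi2 := integrable_sq h hm
  apply Integrable.mono' (hi2.const_mul ((max M 1) ^ (2 * k - 2)))
    (aesm_norm_pow h hm.1.aestronglyMeasurable _)
  filter_upwards [hb] with x hx
  rw [Real.norm_eq_abs, _root_.abs_of_nonneg (by positivity)]
  have h1 : 2 * k = (2 * k - 2) + 2 := by omega
  rw [h1, pow_add]
  apply mul_le_mul _ le_rfl (by positivity) (by positivity)
  exact pow_le_pow_left₀ (norm_nonneg _) (hx.trans (le_max_left _ _)) _

def P {d : ℕ} (h : Dom d → ℂ) (k : ℕ) : ℝ := ∫ x, ‖h x‖ ^ (2 * k) ∂(volume : Measure (Dom d))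

lemma P_nonneg {d : ℕ} (h : Dom d → ℂ) (k : ℕ) : 0 ≤ P h k :=
  integral_nonneg fun x => by positivity

lemma ofReal_P {d : ℕ} (h : Dom d → ℂ) (hm : MemA d h) (k : ℕ) (hk : 1 ≤ k) :
    ENNReal.ofReal (P h k) = ∫⁻ x, ENNReal.ofReal (‖h x‖ ^ (2 * k)) ∂(volume : Measure (Dom d)) :=
  ofReal_integral_eq_lintegral_ofReal (integrable_pow h hm k hk)
    (ae_of_all _ fun x => by positivity)

lemma pip_eq {d : ℕ} (h : Dom d → ℂ) (k : ℕ) : pip d h h k = ((P h k : ℝ) : ℂ) := by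
  have e : ∀ z : ℂ, (starRingEnd ℂ) z ^ k * z ^ k = ((‖z‖ ^ (2 * k) : ℝ) : ℂ) := by
    intro z
    rw [← mul_pow, mul_comm, Complex.mul_conj, Complex.normSq_eq_norm_sq,
      pow_mul]
    push_cast
    ring
  rw [pip, P]
  simp_rw [e]
  exact integral_ofReal

def SR (c : ℝ) {d : ℕ} (h : Dom d → ℂ) (n : ℕ) : ℝ :=
  ∑ p : Nat.Partition n,
    (n ! : ℝ) ^ 2 * 2 ^ (2 * n - 1) *
      ∏ j ∈ p.parts.toFinset,
        c ^ p.parts.count j / (((p.parts.count j)! : ℝ) * (j : ℝ) ^ p.parts.count j) *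
          P h j ^ p.parts.count j

lemma Sker_eq (c : ℝ) {d : ℕ} (h : Dom d → ℂ) (n : ℕ) :
    Sker c d h h n = ((SR c h n : ℝ) : ℂ) := by
  rw [Sker, SR]
  simp only [pip_eq]
  norm_cast

lemma SR_le (c : ℝ) (hc : 0 ≤ c) {d : ℕ} (g h : Dom d → ℂ) (n : ℕ)
    (hP : ∀ j : ℕ, 1 ≤ j → 0 ≤ P g j ∧ P g j ≤ P h j) :
    SR c g n ≤ SR c h n := by
  apply Finset.sum_le_sum
  intro p _
  apply mul_le_mul_of_nonneg_left _ (by positivity)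
  apply Finset.prod_le_prod
  · intro j hj
    have hj1 : 1 ≤ j := p.parts_pos (Multiset.mem_toFinset.1 hj)
    exact mul_nonneg (div_nonneg (pow_nonneg hc _) (by positivity))
      (pow_nonneg (hP j hj1).1 _)
  · intro j hj
    have hj1 : 1 ≤ j := p.parts_pos (Multiset.mem_toFinset.1 hj)
    apply mul_le_mul_of_nonneg_left _ (div_nonneg (pow_nonneg hc _) (by positivity))
    exact pow_le_pow_left₀ (hP j hj1).1 (hP j hj1).2 _

/-- pointwise series expansion of `-log(1-4a²)` in `ℝ≥0∞`. -/
lemma series_pt (a : ℝ) (ha : 0 ≤ a) (ha2 : a < 1/2) :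
    ENNReal.ofReal (-Real.log (1 - 4 * a ^ 2)) =
      ∑' n : ℕ, ENNReal.ofReal ((4:ℝ) ^ (n+1) / (n+1) * a ^ (2 * (n+1))) := by
  have hx : |4 * a ^ 2| < 1 := by
    rw [_root_.abs_of_nonneg (by positivity)]; nlinarith
  have hs := Real.hasSum_pow_div_log_of_abs_lt_one hx
  have he : (fun n : ℕ => (4 * a ^ 2) ^ (n+1) / (n+1)) =
      fun n : ℕ => (4:ℝ) ^ (n+1) / (n+1) * a ^ (2 * (n+1)) := by
    funext n
    rw [mul_pow, pow_mul]
    ring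
  rw [he] at hs
  rw [← hs.tsum_eq]
  exact ENNReal.ofReal_tsum_of_nonneg (fun n => by positivity) hs.summable

/-- the lintegral of `-log(1-4‖h‖²)` as a series. -/
lemma series_lint {d : ℕ} (h : Dom d → ℂ) (hsm : AEStronglyMeasurable h (volume : Measure (Dom d)))
    {M : ℝ} (hb : ∀ᵐ x ∂(volume : Measure (Dom d)), ‖h x‖ ≤ M) (hM : M < 1/2) :
    ∫⁻ x, ENNReal.ofReal (-Real.log (1 - 4 * ‖h x‖ ^ 2)) ∂(volume : Measure (Dom d)) =
      ∑' n : ℕ, ENNReal.ofReal ((4:ℝ) ^ (n+1) / (n+1)) *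
        ∫⁻ x, ENNReal.ofReal (‖h x‖ ^ (2 * (n+1))) ∂(volume : Measure (Dom d)) := by
  have step1 : ∫⁻ x, ENNReal.ofReal (-Real.log (1 - 4 * ‖h x‖ ^ 2)) ∂(volume : Measure (Dom d)) =
      ∫⁻ x, ∑' n : ℕ, ENNReal.ofReal ((4:ℝ) ^ (n+1) / (n+1)) *
        ENNReal.ofReal (‖h x‖ ^ (2 * (n+1))) ∂(volume : Measure (Dom d)) := by
    apply lintegral_congr_ae
    filter_upwards [hb] with x hx
    rw [series_pt ‖h x‖ (norm_nonneg _) (lt_of_le_of_lt hx hM)]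
    congr 1
    funext n
    rw [← ENNReal.ofReal_mul (by positivity)]
  rw [step1, lintegral_tsum]
  · congr 1
    funext n
    exact lintegral_const_mul' _ _ ENNReal.ofReal_ne_top
  · intro n
    exact (((aesm_norm_pow h hsm _).aemeasurable).ennreal_ofReal).const_mul _

lemma log_nonneg' {a : ℝ} (ha : 0 ≤ a) (ha2 : a < 1/2) : 0 ≤ -Real.log (1 - 4 * a ^ 2) := by
  rw [neg_nonneg]
  apply Real.log_nonpos (by nlinarith) (by nlinarith)

lemma neg_log_le {a M : ℝ} (ha : 0 ≤ a) (haM : a ≤ M) (hM : M < 1/2) :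
    -Real.log (1 - 4 * a ^ 2) ≤ 4 / (1 - 4 * M ^ 2) * a ^ 2 := by
  have hM0 : 0 ≤ M := le_trans ha haM
  have h1 : 0 < 1 - 4 * M ^ 2 := by nlinarith
  have h2 : 0 < 1 - 4 * a ^ 2 := by nlinarith
  have h3 : -Real.log (1 - 4 * a ^ 2) = Real.log (1 - 4 * a ^ 2)⁻¹ := (Real.log_inv _).symm
  rw [h3]
  have h4 := Real.log_le_sub_one_of_pos (inv_pos.2 h2)
  have h5 : (1 - 4 * a ^ 2)⁻¹ - 1 = 4 * a ^ 2 / (1 - 4 * a ^ 2) := by field_simp; ring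
  have h6 : 4 * a ^ 2 / (1 - 4 * a ^ 2) ≤ 4 * a ^ 2 / (1 - 4 * M ^ 2) := by
    apply div_le_div_of_nonneg_left (by positivity) h1
    nlinarith
  calc Real.log (1 - 4 * a ^ 2)⁻¹ ≤ (1 - 4 * a ^ 2)⁻¹ - 1 := h4
    _ = 4 * a ^ 2 / (1 - 4 * a ^ 2) := h5
    _ ≤ 4 * a ^ 2 / (1 - 4 * M ^ 2) := h6
    _ = 4 / (1 - 4 * M ^ 2) * a ^ 2 := by ring

lemma integrable_log {d : ℕ} (h : Dom d → ℂ) (hm : MemA d h)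
    {M : ℝ} (hb : ∀ᵐ x ∂(volume : Measure (Dom d)), ‖h x‖ ≤ M) (hM : M < 1/2) :
    Integrable (fun x => Real.log (1 - 4 * ‖h x‖ ^ 2)) (volume : Measure (Dom d)) := by
  apply Integrable.mono' ((integrable_sq h hm).const_mul (4 / (1 - 4 * M ^ 2)))
  · apply (Real.measurable_log.comp_aemeasurable ?_).aestronglyMeasurable
    exact (aemeasurable_const.sub (((aesm_norm_pow h hm.1.aestronglyMeasurable 2)
      |>.aemeasurable).const_mul 4))
  · filter_upwards [hb] with x hx
    have ha := norm_nonneg (h x)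
    have haM : ‖h x‖ < 1/2 := lt_of_le_of_lt hx hM
    rw [Real.norm_eq_abs, abs_le]
    constructor
    · have := neg_log_le ha hx hM
      linarith
    · have h0 := log_nonneg' ha haM
      have h1 : (0:ℝ) ≤ 4 / (1 - 4 * M ^ 2) * ‖h x‖ ^ 2 := by
        have hM0 : 0 ≤ M := le_trans ha hx
        have : 0 < 1 - 4 * M ^ 2 := by nlinarith
        positivity
    -- log ≤ 0 ≤ rhs
      linarith

lemma Kker_eq (c : ℝ) {d : ℕ} (h : Dom d → ℂ)
    {M : ℝ} (hb : ∀ᵐ x ∂(volume : Measure (Dom d)), ‖h x‖ ≤ M) (hM : M < 1/2) :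
    Kker c d h h =
      ((Real.exp (-(c/2) * ∫ x, Real.log (1 - 4 * ‖h x‖ ^ 2) ∂(volume : Measure (Dom d))) : ℝ) : ℂ) := by
  rw [Kker]
  have e1 : ∫ x, Complex.log (1 - 4 * (starRingEnd ℂ) (h x) * h x) ∂(volume : Measure (Dom d))
      = (((∫ x, Real.log (1 - 4 * ‖h x‖ ^ 2) ∂(volume : Measure (Dom d))) : ℝ) : ℂ) := by
    have cong : ∫ x, Complex.log (1 - 4 * (starRingEnd ℂ) (h x) * h x) ∂(volume : Measure (Dom d))
        = ∫ x, ((Real.log (1 - 4 * ‖h x‖ ^ 2) : ℝ) : ℂ) ∂(volume : Measure (Dom d)) := by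
      apply integral_congr_ae
      filter_upwards [hb] with x hx
      have ha := norm_nonneg (h x)
      have hpos : 0 < 1 - 4 * ‖h x‖ ^ 2 := by nlinarith [lt_of_le_of_lt hx hM]
      have e2 : 1 - 4 * (starRingEnd ℂ) (h x) * h x = ((1 - 4 * ‖h x‖ ^ 2 : ℝ) : ℂ) := by
        rw [mul_assoc, mul_comm ((starRingEnd ℂ) (h x)), Complex.mul_conj,
          Complex.normSq_eq_norm_sq]
        push_cast
        ring
      rw [e2, ← Complex.ofReal_log hpos.le]
    rw [cong]
    exact integral_ofReal
  rw [e1, show -((c:ℂ)/2) * (((∫ x, Real.log (1 - 4 * ‖h x‖ ^ 2) ∂(volume : Measure (Dom d))) : ℝ) : ℂ)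
      = (((-(c/2) * ∫ x, Real.log (1 - 4 * ‖h x‖ ^ 2) ∂(volume : Measure (Dom d))) : ℝ) : ℂ) by
    push_cast; ring]
  exact (Complex.ofReal_exp _).symm

end St18

/-- Lemma 15 of the paper: if `T` is a linear contraction of `𝒜` for
both `∥·∥₂` and `∥·∥_∞`, then `S_n(Tf,Tf) ≤ S_n(f,f)` for all `n`, and for
`∥f∥_∞ < 1/2` also `K(Tf,Tf) ≤ K(f,f)`, i.e.
`−∫ log(1−4|Tf|²) ≤ −∫ log(1−4|f|²)`; in other words
`∥Γ₂(T)Ψ(f)∥ ≤ ∥Ψ(f)∥` for every quadratic exponential vector. -/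
theorem statement18 (d : ℕ) (hd : 1 ≤ d) (c : ℝ) (hc : 0 < c)
    (T : (Dom d → ℂ) → (Dom d → ℂ))
    (hTmem : ∀ f, MemA d f → MemA d (T f))
    (hTae : ∀ f g, MemA d f → MemA d g → f =ᵐ[(volume : Measure (Dom d))] g →
      T f =ᵐ[(volume : Measure (Dom d))] T g)
    (hTadd : ∀ f g, MemA d f → MemA d g →
      T (f + g) =ᵐ[(volume : Measure (Dom d))] T f + T g)
    (hTsmul : ∀ (a : ℂ) (f : Dom d → ℂ), MemA d f →
      T (a • f) =ᵐ[(volume : Measure (Dom d))] a • T f)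
    (hT2 : ∀ f, MemA d f →
      eLpNorm (T f) 2 (volume : Measure (Dom d)) ≤ eLpNorm f 2 (volume : Measure (Dom d)))
    (hTinf : ∀ f, MemA d f →
      eLpNorm (T f) ⊤ (volume : Measure (Dom d)) ≤ eLpNorm f ⊤ (volume : Measure (Dom d)))
    (f : Dom d → ℂ) (hf : MemA d f) :
    (∀ n : ℕ, (Sker c d (T f) (T f) n).im = 0 ∧ (Sker c d f f n).im = 0 ∧
      (Sker c d (T f) (T f) n).re ≤ (Sker c d f f n).re) ∧
    (eLpNorm f ⊤ (volume : Measure (Dom d)) < 1 / 2 →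
      ((Kker c d (T f) (T f)).im = 0 ∧ (Kker c d f f).im = 0 ∧
        (Kker c d (T f) (T f)).re ≤ (Kker c d f f).re) ∧
      -∫ x : Dom d, Real.log (1 - 4 * ‖T f x‖ ^ 2) ≤
        -∫ x : Dom d, Real.log (1 - 4 * ‖f x‖ ^ 2)) := by
  have hgA := hTmem f hf
  have hsq : ∫⁻ x, ENNReal.ofReal (‖T f x‖ ^ 2) ∂(volume : Measure (Dom d)) ≤
      ∫⁻ x, ENNReal.ofReal (‖f x‖ ^ 2) ∂(volume : Measure (Dom d)) := by
    rw [St18.lintegral_sq_eq, St18.lintegral_sq_eq]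
    gcongr
    exact hT2 f hf
  have hAt : ∀ t : ℝ, 0 < t →
      ∫⁻ x, ENNReal.ofReal ((max (‖T f x‖ - t) 0) ^ 2) ∂(volume : Measure (Dom d)) ≤
        ∫⁻ x, ENNReal.ofReal ((max (‖f x‖ - t) 0) ^ 2) ∂(volume : Measure (Dom d)) :=
    fun t ht => St18.lemA T hTadd hT2 hTinf f hf ht
  have hBk : ∀ k : ℕ, 1 ≤ k →
      ∫⁻ x, ENNReal.ofReal (‖T f x‖ ^ (2 * k)) ∂(volume : Measure (Dom d)) ≤
        ∫⁻ x, ENNReal.ofReal (‖f x‖ ^ (2 * k)) ∂(volume : Measure (Dom d)) :=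
    St18.lemB (T f) f hgA.1.aestronglyMeasurable hf.1.aestronglyMeasurable hsq hAt
  have hP : ∀ j : ℕ, 1 ≤ j → 0 ≤ St18.P (T f) j ∧ St18.P (T f) j ≤ St18.P f j := by
    intro j hj
    refine ⟨St18.P_nonneg _ _, ?_⟩
    have h1 := hBk j hj
    rw [← St18.ofReal_P (T f) hgA j hj, ← St18.ofReal_P f hf j hj] at h1
    exact (ENNReal.ofReal_le_ofReal_iff (St18.P_nonneg f j)).1 h1
  constructor
  · intro n
    rw [St18.Sker_eq c (T f) n, St18.Sker_eq c f n]
    refine ⟨Complex.ofReal_im _, Complex.ofReal_im _, ?_⟩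
    rw [Complex.ofReal_re, Complex.ofReal_re]
    exact St18.SR_le c hc.le (T f) f n hP
  · intro hsmall
    set M := (eLpNorm f ⊤ (volume : Measure (Dom d))).toReal with hMdef
    have hftop : eLpNorm f ⊤ (volume : Measure (Dom d)) ≠ ⊤ :=
      (hsmall.trans_le le_top).ne
    have hM : M < 1 / 2 := by
      have h12 : ((1 / 2 : ℝ≥0∞)).toReal = 1 / 2 := by norm_num
      rw [hMdef, ← h12]
      exact ENNReal.toReal_strict_mono (by norm_num) hsmall
    have hbf : ∀ᵐ x ∂(volume : Measure (Dom d)), ‖f x‖ ≤ M := St18.ae_bound f hf.2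
    have hbg : ∀ᵐ x ∂(volume : Measure (Dom d)), ‖T f x‖ ≤ M := by
      have h1 := St18.ae_bound (T f) hgA.2
      have h2 : (eLpNorm (T f) ⊤ (volume : Measure (Dom d))).toReal ≤ M :=
        ENNReal.toReal_mono hftop (hTinf f hf)
      filter_upwards [h1] with x hx using hx.trans h2
    have hIg := St18.integrable_log (T f) hgA hbg hM
    have hIf := St18.integrable_log f hf hbf hM
    have hnng : ∀ᵐ x ∂(volume : Measure (Dom d)),
        0 ≤ -Real.log (1 - 4 * ‖T f x‖ ^ 2) := by
      filter_upwards [hbg] with x hx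
      exact St18.log_nonneg' (norm_nonneg _) (hx.trans_lt hM)
    have hnnf : ∀ᵐ x ∂(volume : Measure (Dom d)),
        0 ≤ -Real.log (1 - 4 * ‖f x‖ ^ 2) := by
      filter_upwards [hbf] with x hx
      exact St18.log_nonneg' (norm_nonneg _) (hx.trans_lt hM)
    have hcore : -∫ x, Real.log (1 - 4 * ‖T f x‖ ^ 2) ∂(volume : Measure (Dom d)) ≤
        -∫ x, Real.log (1 - 4 * ‖f x‖ ^ 2) ∂(volume : Measure (Dom d)) := by
      rw [← integral_neg, ← integral_neg]
      have hlintle : ∫⁻ x, ENNReal.ofReal (-Real.log (1 - 4 * ‖T f x‖ ^ 2))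
            ∂(volume : Measure (Dom d)) ≤
          ∫⁻ x, ENNReal.ofReal (-Real.log (1 - 4 * ‖f x‖ ^ 2))
            ∂(volume : Measure (Dom d)) := by
        rw [St18.series_lint (T f) hgA.1.aestronglyMeasurable hbg hM,
          St18.series_lint f hf.1.aestronglyMeasurable hbf hM]
        exact ENNReal.tsum_le_tsum fun n => mul_le_mul_right (hBk (n + 1) (by omega)) _
      have e1 : ENNReal.ofReal (∫ a, -Real.log (1 - 4 * ‖T f a‖ ^ 2)
            ∂(volume : Measure (Dom d))) =
          ∫⁻ x, ENNReal.ofReal (-Real.log (1 - 4 * ‖T f x‖ ^ 2))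
            ∂(volume : Measure (Dom d)) :=
        ofReal_integral_eq_lintegral_ofReal hIg.neg hnng
      have e2 : ENNReal.ofReal (∫ a, -Real.log (1 - 4 * ‖f a‖ ^ 2)
            ∂(volume : Measure (Dom d))) =
          ∫⁻ x, ENNReal.ofReal (-Real.log (1 - 4 * ‖f x‖ ^ 2))
            ∂(volume : Measure (Dom d)) :=
        ofReal_integral_eq_lintegral_ofReal hIf.neg hnnf
      rw [← e1, ← e2] at hlintle
      exact (ENNReal.ofReal_le_ofReal_iff (integral_nonneg_of_ae hnnf)).1 hlintle
    refine ⟨⟨?_, ?_, ?_⟩, hcore⟩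
    · rw [St18.Kker_eq c (T f) hbg hM]
      exact Complex.ofReal_im _
    · rw [St18.Kker_eq c f hbf hM]
      exact Complex.ofReal_im _
    · rw [St18.Kker_eq c (T f) hbg hM, St18.Kker_eq c f hbf hM,
        Complex.ofReal_re, Complex.ofReal_re]
      apply Real.exp_le_exp.2
      nlinarith [hcore, hc.le]
end
end
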